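/- arXiv:2010.08064 — 8 statements merged into one kernel-verified Lean document; each statement's English description precedes it below -/
import Mathlib

section
/- Let (X,d) be a metric space and let ψ be a (ρ₋,ρ₊,C)-coarse near-action of a group G on X. Let x₀ ∈ X and suppose R > 0 is such that any two points of X are joined by a finite chain of points with consecutive distances ≤ R, and such that the orbit {ψ(γ)(x₀) : γ ∈ G} is R-dense in X (every point of X lies within distance R of some ψ(γ)(x₀)). Then the set S = {γ ∈ G : d(ψ(γ)(x₀), x₀) ≤ ρ₊(3R) + 3C} generates G. If moreover ψ is proper, then S is finite, so G is finitely generated. -/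
open Metric Filter

/-- Nondecreasing control functions `[0,∞) → [0,∞)` with `ρ₋(r) → ∞` as `r → ∞`. -/
def ControlFns (rm rp : ℝ → ℝ) : Prop :=
  MonotoneOn rm (Set.Ici 0) ∧ MonotoneOn rp (Set.Ici 0) ∧
  (∀ r, 0 ≤ r → 0 ≤ rm r) ∧ (∀ r, 0 ≤ r → 0 ≤ rp r) ∧
  Tendsto rm atTop atTop

/-- `f` is a `(ρ₋,ρ₊)`-coarse embedding. -/
def IsCoarseEmbeddingWith {X Y : Type*} [MetricSpace X] [MetricSpace Y]
    (rm rp : ℝ → ℝ) (f : X → Y) : Prop :=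
  ∀ x₁ x₂ : X, rm (dist x₁ x₂) ≤ dist (f x₁) (f x₂) ∧
    dist (f x₁) (f x₂) ≤ rp (dist x₁ x₂)

/-- A `C`-near-action of a group `G` on a metric space `X`. -/
def IsCNearAction {G X : Type*} [Group G] [MetricSpace X] (C : ℝ) (ψ : G → X → X) : Prop :=
  (∀ x : X, dist (ψ 1 x) x ≤ C) ∧
  ∀ (γ₁ γ₂ : G) (x : X), dist (ψ (γ₁ * γ₂) x) (ψ γ₁ (ψ γ₂ x)) ≤ C

/-- A `(ρ₋,ρ₊,C)`-coarse near-action: a `C`-near-action in which every `ψ γ` is a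
`(ρ₋,ρ₊)`-coarse embedding. -/
def IsCoarseNearAction {G X : Type*} [Group G] [MetricSpace X]
    (rm rp : ℝ → ℝ) (C : ℝ) (ψ : G → X → X) : Prop :=
  ControlFns rm rp ∧ 0 ≤ C ∧ IsCNearAction C ψ ∧
    ∀ γ : G, IsCoarseEmbeddingWith rm rp (ψ γ)

/-- The near-action `ψ` is proper. -/
def IsProperNearAction {G X : Type*} [Group G] [MetricSpace X] (ψ : G → X → X) : Prop :=
  ∀ R : ℝ, 0 < R → ∃ M : ℕ, ∀ x y : X,
    {γ : G | ∃ z ∈ closedBall x R, ψ γ z ∈ closedBall y R}.encard ≤ (M : ℕ∞)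

/-- If `X` is `R`-chain connected and the orbit of `x₀` is `R`-dense, then
`S = {γ : d(ψ(γ)(x₀), x₀) ≤ ρ₊(3R) + 3C}` generates `G`; if moreover `ψ` is proper
then `S` is finite, so `G` is finitely generated. -/
theorem stmt3 {G X : Type*} [Group G] [MetricSpace X] (rm rp : ℝ → ℝ) (C : ℝ)
    (ψ : G → X → X) (hψ : IsCoarseNearAction rm rp C ψ)
    (x₀ : X) (R : ℝ) (hR : 0 < R)
    (hchain : ∀ x x' : X, ∃ (n : ℕ) (c : ℕ → X), c 0 = x ∧ c n = x' ∧
      ∀ i < n, dist (c i) (c (i + 1)) ≤ R)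
    (hdense : ∀ y : X, ∃ γ : G, dist (ψ γ x₀) y ≤ R) :
    Subgroup.closure {γ : G | dist (ψ γ x₀) x₀ ≤ rp (3 * R) + 3 * C} = ⊤ ∧
    (IsProperNearAction ψ →
      {γ : G | dist (ψ γ x₀) x₀ ≤ rp (3 * R) + 3 * C}.Finite ∧ Group.FG G) := by
  obtain ⟨⟨hrmm, hrpm, hrmn, hrpn, hrmt⟩, hC, ⟨h1, hmul⟩, hemb⟩ := hψ
  set S : Set G := {γ : G | dist (ψ γ x₀) x₀ ≤ rp (3 * R) + 3 * C} with hS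
  have h3R : (0:ℝ) ≤ 3 * R := by linarith
  have hrp3R : 0 ≤ rp (3 * R) := hrpn _ h3R
  -- key lemma
  have key : ∀ γ₁ γ₂ : G, dist (ψ γ₂ x₀) (ψ γ₁ x₀) ≤ 3 * R → (γ₁⁻¹ * γ₂) ∈ S := by
    intro γ₁ γ₂ h
    have a1 : dist (ψ (γ₁⁻¹ * γ₂) x₀) (ψ γ₁⁻¹ (ψ γ₂ x₀)) ≤ C := hmul γ₁⁻¹ γ₂ x₀
    have a2 : dist (ψ γ₁⁻¹ (ψ γ₂ x₀)) (ψ γ₁⁻¹ (ψ γ₁ x₀)) ≤ rp (3 * R) :=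
      le_trans (hemb γ₁⁻¹ _ _).2 (hrpm (Set.mem_Ici.mpr dist_nonneg) (Set.mem_Ici.mpr h3R) h)
    have a3 : dist (ψ γ₁⁻¹ (ψ γ₁ x₀)) (ψ (γ₁⁻¹ * γ₁) x₀) ≤ C := by
      rw [dist_comm]; exact hmul γ₁⁻¹ γ₁ x₀
    have a4 : dist (ψ (γ₁⁻¹ * γ₁) x₀) x₀ ≤ C := by
      rw [inv_mul_cancel]; exact h1 x₀
    have t1 := dist_triangle (ψ (γ₁⁻¹ * γ₂) x₀) (ψ γ₁⁻¹ (ψ γ₂ x₀)) x₀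
    have t2 := dist_triangle (ψ γ₁⁻¹ (ψ γ₂ x₀)) (ψ γ₁⁻¹ (ψ γ₁ x₀)) x₀
    have t3 := dist_triangle (ψ γ₁⁻¹ (ψ γ₁ x₀)) (ψ (γ₁⁻¹ * γ₁) x₀) x₀
    show dist (ψ (γ₁⁻¹ * γ₂) x₀) x₀ ≤ rp (3 * R) + 3 * C
    linarith
  -- base lemma
  have base : ∀ γ : G, dist (ψ γ x₀) x₀ ≤ R → γ ∈ S := by
    intro γ h
    have a1 : dist (ψ γ x₀) (ψ 1 (ψ γ x₀)) ≤ C := by rw [dist_comm]; exact h1 _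
    have a2 : dist (ψ 1 (ψ γ x₀)) (ψ 1 x₀) ≤ rp (3 * R) :=
      le_trans (hemb 1 _ _).2 (hrpm (Set.mem_Ici.mpr dist_nonneg) (Set.mem_Ici.mpr h3R)
        (by linarith))
    have a3 : dist (ψ (1:G) x₀) x₀ ≤ C := h1 x₀
    have t1 := dist_triangle (ψ γ x₀) (ψ 1 (ψ γ x₀)) x₀
    have t2 := dist_triangle (ψ (1:G) (ψ γ x₀)) (ψ (1:G) x₀) x₀
    show dist (ψ γ x₀) x₀ ≤ rp (3 * R) + 3 * C
    linarith
  have main : ∀ (n : ℕ) (c : ℕ → X) (γ : G), c 0 = x₀ →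
      (∀ i < n, dist (c i) (c (i + 1)) ≤ R) → dist (ψ γ x₀) (c n) ≤ R →
      γ ∈ Subgroup.closure S := by
    intro n
    induction n with
    | zero =>
      intro c γ hc0 _ hd
      rw [hc0] at hd
      exact Subgroup.subset_closure (base γ hd)
    | succ n ih =>
      intro c γ hc0 hsteps hd
      obtain ⟨γ', hγ'⟩ := hdense (c n)
      have hγ'mem : γ' ∈ Subgroup.closure S :=
        ih c γ' hc0 (fun i hi => hsteps i (Nat.lt_succ_of_lt hi)) hγ'
      have hstep : dist (c n) (c (n + 1)) ≤ R := hsteps n (Nat.lt_succ_self n)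
      have hσ : (γ'⁻¹ * γ) ∈ S := by
        apply key
        have t1 := dist_triangle (ψ γ x₀) (c (n + 1)) (ψ γ' x₀)
        have t2 := dist_triangle (c (n + 1)) (c n) (ψ γ' x₀)
        rw [dist_comm (c (n+1)) (c n)] at t2
        rw [dist_comm (ψ γ' x₀) (c n)] at hγ'
        linarith
      have : γ = γ' * (γ'⁻¹ * γ) := by group
      rw [this]
      exact mul_mem hγ'mem (Subgroup.subset_closure hσ)
  have hgen : Subgroup.closure S = ⊤ := by
    rw [eq_top_iff]
    intro γ _
    obtain ⟨n, c, hc0, hcn, hsteps⟩ := hchain x₀ (ψ γ x₀)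
    exact main n c γ hc0 hsteps (by rw [hcn, dist_self]; linarith)
  refine ⟨hgen, fun hp => ?_⟩
  have hR' : (0:ℝ) < rp (3 * R) + 3 * C + R := by linarith
  obtain ⟨M, hM⟩ := hp _ hR'
  have hsub : S ⊆ {γ : G | ∃ z ∈ closedBall x₀ (rp (3 * R) + 3 * C + R),
      ψ γ z ∈ closedBall x₀ (rp (3 * R) + 3 * C + R)} := by
    intro γ hγ
    exact ⟨x₀, mem_closedBall_self (by linarith), mem_closedBall.mpr (by
      simpa using le_trans hγ (by linarith))⟩
  have hfin : S.Finite := by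
    rw [← Set.encard_lt_top_iff]
    exact lt_of_le_of_lt (le_trans (Set.encard_mono hsub) (hM x₀ x₀))
      (WithTop.coe_lt_top M)
  exact ⟨hfin, Group.fg_iff.mpr ⟨S, hgen, hfin⟩⟩
end

section
/- Suppose a coarsely connected metric space (X,d) admits a proper, cobounded (ρ₋,ρ₊,C)-coarse near-action ψ by a group G. Then G is finitely generated and, for any x₀ ∈ X, there exists a finite symmetric generating set S of G such that the orbit map γ ↦ ψ(γ)(x₀) is a coarse equivalence from (G, d_S) to (X,d), where d_S is the word metric determined by S. -/
open Metric Filter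

/-- The near-action `ψ` is cobounded. -/
def IsCoboundedNearAction {G X : Type*} [Group G] [MetricSpace X] (ψ : G → X → X) : Prop :=
  ∃ (x₀ : X) (R : ℝ), 0 < R ∧ ∀ y : X, ∃ γ : G, dist (ψ γ x₀) y < R

/-- `X` is coarsely connected: some `R > 0` joins any two points by an `R`-chain. -/
def IsCoarselyConnected (X : Type*) [MetricSpace X] : Prop :=
  ∃ R : ℝ, 0 < R ∧ ∀ x x' : X, ∃ (n : ℕ) (c : ℕ → X), c 0 = x ∧ c n = x' ∧
    ∀ i < n, dist (c i) (c (i + 1)) ≤ R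

/-- The word metric on `G` determined by a generating set `S`:
`wordDist S g h` is the least `n` such that `g⁻¹ * h` is a product of `n` elements of `S`. -/
noncomputable def wordDist {G : Type*} [Group G] (S : Set G) (g h : G) : ℝ :=
  ((sInf {n : ℕ | ∃ l : List G, l.length = n ∧ (∀ x ∈ l, x ∈ S) ∧ l.prod = g⁻¹ * h} : ℕ) : ℝ)

/-- A coarse equivalence from `(A, dA)` to `(B, dB)`: a coarse embedding that is
`C`-surjective for some `C ≥ 0`. -/
def IsCoarseEquivPair {A B : Type*} (dA : A → A → ℝ) (dB : B → B → ℝ) (f : A → B) : Prop :=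
  (∃ rm rp : ℝ → ℝ, ControlFns rm rp ∧
    ∀ a₁ a₂ : A, rm (dA a₁ a₂) ≤ dB (f a₁) (f a₂) ∧
      dB (f a₁) (f a₂) ≤ rp (dA a₁ a₂)) ∧
  ∃ C : ℝ, 0 ≤ C ∧ ∀ b : B, ∃ a : A, dB b (f a) ≤ C


private lemma telescope_prod {G : Type*} [Group G] :
    ∀ (n : ℕ) (g : ℕ → G),
      (List.ofFn (fun i : Fin n => (g i)⁻¹ * g (i + 1))).prod = (g 0)⁻¹ * g n := by
  intro n
  induction n with
  | zero => intro g; simp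
  | succ n ih =>
    intro g
    rw [List.ofFn_succ]
    simp only [List.prod_cons, Fin.val_succ, Fin.val_zero]
    have h := ih (fun k => g (k + 1))
    rw [h]
    group
private lemma SM_main {G X : Type*} [Group G] [MetricSpace X]
    (hX : IsCoarselyConnected X) (rm rp : ℝ → ℝ) (C : ℝ) (ψ : G → X → X)
    (hψ : IsCoarseNearAction rm rp C ψ)
    (hproper : IsProperNearAction ψ) (hcb : IsCoboundedNearAction ψ) (x₀ : X) :
    ∃ S : Set G, S.Finite ∧ (∀ s ∈ S, s⁻¹ ∈ S) ∧ Subgroup.closure S = ⊤ ∧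
      IsCoarseEquivPair (wordDist S) dist (fun γ : G => ψ γ x₀) := by
  obtain ⟨hctl, hC, ⟨hψ1, hψm⟩, hemb⟩ := hψ
  obtain ⟨-, hrpM, -, hrp0, -⟩ := hctl
  obtain ⟨RX, hRX, hchain⟩ := hX
  obtain ⟨z₀, R, hRpos, hcov⟩ := hcb
  have hrple : ∀ a b : ℝ, 0 ≤ a → a ≤ b → rp a ≤ rp b := fun a b ha hab =>
    hrpM (Set.mem_Ici.2 ha) (Set.mem_Ici.2 (ha.trans hab)) hab
  -- Lemma A
  have lemA : ∀ g h : G, dist (ψ (g⁻¹ * h) x₀) x₀ ≤ 3*C + rp (dist (ψ g x₀) (ψ h x₀)) := by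
    intro g h
    have t1 : dist (ψ (g⁻¹ * h) x₀) (ψ g⁻¹ (ψ h x₀)) ≤ C := hψm g⁻¹ h x₀
    have t2 : dist (ψ g⁻¹ (ψ h x₀)) (ψ g⁻¹ (ψ g x₀)) ≤ rp (dist (ψ g x₀) (ψ h x₀)) := by
      rw [dist_comm (ψ g x₀)]
      exact (hemb g⁻¹ (ψ h x₀) (ψ g x₀)).2
    have t3 : dist (ψ g⁻¹ (ψ g x₀)) (ψ (g⁻¹ * g) x₀) ≤ C := by
      rw [dist_comm]; exact hψm g⁻¹ g x₀
    have t4 : dist (ψ (g⁻¹ * g) x₀) x₀ ≤ C := by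
      rw [inv_mul_cancel]; exact hψ1 x₀
    have tri1 : dist (ψ (g⁻¹ * h) x₀) x₀ ≤
        dist (ψ (g⁻¹ * h) x₀) (ψ (g⁻¹ * g) x₀) + dist (ψ (g⁻¹ * g) x₀) x₀ :=
      dist_triangle _ _ _
    have tri2 : dist (ψ (g⁻¹ * h) x₀) (ψ (g⁻¹ * g) x₀) ≤
        dist (ψ (g⁻¹ * h) x₀) (ψ g⁻¹ (ψ h x₀)) + dist (ψ g⁻¹ (ψ h x₀)) (ψ g⁻¹ (ψ g x₀)) +
          dist (ψ g⁻¹ (ψ g x₀)) (ψ (g⁻¹ * g) x₀) := dist_triangle4 _ _ _ _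
    linarith
  set K₀ := R + rp (dist x₀ z₀) with hK₀def
  have hK₀ : 0 ≤ K₀ := add_nonneg hRpos.le (hrp0 _ dist_nonneg)
  have near : ∀ y : X, ∃ g : G, dist (ψ g x₀) y ≤ K₀ := by
    intro y
    obtain ⟨g, hg⟩ := hcov y
    refine ⟨g, ?_⟩
    have h1 : dist (ψ g x₀) (ψ g z₀) ≤ rp (dist x₀ z₀) := (hemb g x₀ z₀).2
    have h2 := dist_triangle (ψ g x₀) (ψ g z₀) y
    rw [hK₀def]; linarith
  set R₁ := max K₀ C with hR₁def
  have hR₁0 : 0 ≤ R₁ := le_trans hK₀ (le_max_left _ _)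
  set L := 3*C + rp (R₁ + RX + R₁) with hLdef
  have hL0 : 0 ≤ L := add_nonneg (by linarith) (hrp0 _ (by linarith))
  set S₀ : Set G := {γ : G | dist (ψ γ x₀) x₀ ≤ L} with hS₀def
  set S : Set G := S₀ ∪ {γ : G | γ⁻¹ ∈ S₀} with hSdef
  -- generation
  have genB : ∀ γ : G, ∃ l : List G, (∀ s ∈ l, s ∈ S₀) ∧ l.prod = γ := by
    intro γ
    obtain ⟨n, c, hc0, hcn, hstep⟩ := hchain x₀ (ψ γ x₀)
    choose q hq using near
    set g : ℕ → G := fun i => if i = 0 then 1 else q (c i) with hgdef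
    have hg : ∀ i, i ≤ n → dist (ψ (g i) x₀) (c i) ≤ R₁ := by
      intro i _
      by_cases h0 : i = 0
      · subst h0
        have : g 0 = 1 := by simp [hgdef]
        rw [this, hc0]
        exact le_trans (hψ1 x₀) (le_max_right _ _)
      · have : g i = q (c i) := by simp [hgdef, h0]
        rw [this]
        exact le_trans (hq (c i)) (le_max_left _ _)
    have hmemstep : ∀ (a b : G), dist (ψ a x₀) (ψ b x₀) ≤ R₁ + RX + R₁ → a⁻¹ * b ∈ S₀ := by
      intro a b hab
      have h1 := lemA a b
      have h2 := hrple _ _ dist_nonneg hab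
      show dist (ψ (a⁻¹*b) x₀) x₀ ≤ L
      rw [hLdef]; linarith
    refine ⟨(List.ofFn (fun i : Fin n => (g i)⁻¹ * g (i+1))) ++ [(g n)⁻¹ * γ], ?_, ?_⟩
    · intro s hs
      rcases List.mem_append.1 hs with hs | hs
      · rw [List.mem_ofFn] at hs
        obtain ⟨i, rfl⟩ := hs
        apply hmemstep
        have h1 := hg i (le_of_lt i.2)
        have h2 := hg (i+1) i.2
        have h3 := hstep i i.2
        have h4 : dist (c (↑i+1)) (ψ (g (↑i+1)) x₀) ≤ R₁ := by rw [dist_comm]; exact h2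
        calc dist (ψ (g ↑i) x₀) (ψ (g (↑i+1)) x₀)
            ≤ dist (ψ (g ↑i) x₀) (c ↑i) + dist (c ↑i) (c (↑i+1)) +
              dist (c (↑i+1)) (ψ (g (↑i+1)) x₀) := dist_triangle4 _ _ _ _
          _ ≤ R₁ + RX + R₁ := by linarith
      · rw [List.mem_singleton] at hs
        subst hs
        apply hmemstep
        have h1 := hg n le_rfl
        rw [hcn] at h1
        linarith [h1, hRX.le, hR₁0]
    · rw [List.prod_append, List.prod_singleton, telescope_prod]
      have hg0 : g 0 = 1 := by simp [hgdef]
      rw [hg0]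
      group
  -- finiteness
  have hfin : ∀ D : ℝ, {γ : G | dist (ψ γ x₀) x₀ ≤ D}.Finite := by
    intro D
    obtain ⟨M, hM⟩ := hproper (max D 0 + 1) (by positivity)
    have hsub : {γ : G | dist (ψ γ x₀) x₀ ≤ D} ⊆
        {γ : G | ∃ z ∈ closedBall x₀ (max D 0 + 1), ψ γ z ∈ closedBall x₀ (max D 0 + 1)} := by
      intro γ hγ
      refine ⟨x₀, ?_, ?_⟩
      · rw [mem_closedBall, dist_self]; positivity
      · rw [mem_closedBall]
        exact le_trans hγ (by linarith [le_max_left D (0:ℝ)])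
    rw [← Set.encard_ne_top_iff]
    intro htop
    have h2 : (⊤ : ℕ∞) ≤ (M : ℕ∞) := le_trans (htop ▸ Set.encard_mono hsub) (hM x₀ x₀)
    simp at h2
  have hS₀fin : S₀.Finite := hfin L
  have hSfin : S.Finite := by
    apply hS₀fin.union
    have heq : {γ : G | γ⁻¹ ∈ S₀} = Inv.inv ⁻¹' S₀ := rfl
    rw [heq]
    exact Set.Finite.preimage (fun a _ b _ h => inv_injective h) hS₀fin
  have hSsym : ∀ s ∈ S, s⁻¹ ∈ S := by
    intro s hs
    rcases hs with hs | hs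
    · right
      show s⁻¹⁻¹ ∈ S₀
      rwa [inv_inv]
    · exact Or.inl hs
  have hclosure : Subgroup.closure S = ⊤ := by
    rw [eq_top_iff]
    intro γ _
    obtain ⟨l, hl, hprod⟩ := genB γ
    rw [← hprod]
    exact Subgroup.list_prod_mem _ (fun x hx => Subgroup.subset_closure (Or.inl (hl x hx)))
  -- word distance basics
  set W : G → G → Set ℕ := fun g h =>
    {n : ℕ | ∃ l : List G, l.length = n ∧ (∀ x ∈ l, x ∈ S) ∧ l.prod = g⁻¹ * h} with hWdef
  have hWne : ∀ g h : G, (W g h).Nonempty := by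
    intro g h
    obtain ⟨l, hl, hprod⟩ := genB (g⁻¹ * h)
    exact ⟨l.length, l, rfl, fun x hx => Or.inl (hl x hx), hprod⟩
  have hwd : ∀ g h : G, wordDist S g h = ((sInf (W g h) : ℕ) : ℝ) := fun g h => rfl
  have hwd_nonneg : ∀ g h : G, 0 ≤ wordDist S g h := fun g h => Nat.cast_nonneg _
  -- step bound for elements of S
  set L₁ := max L (3*C + rp (L + C)) with hL₁def
  have hL₁0 : 0 ≤ L₁ := le_trans hL0 (le_max_left _ _)
  have hstepS : ∀ s ∈ S, dist (ψ s x₀) x₀ ≤ L₁ := by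
    intro s hs
    rcases hs with hs | hs
    · exact le_trans hs (le_max_left _ _)
    · have h1 := lemA s⁻¹ 1
      rw [inv_inv, mul_one] at h1
      have h2 : dist (ψ s⁻¹ x₀) (ψ 1 x₀) ≤ L + C := by
        have h3 := dist_triangle (ψ s⁻¹ x₀) x₀ (ψ 1 x₀)
        have h4 : dist x₀ (ψ 1 x₀) ≤ C := by rw [dist_comm]; exact hψ1 x₀
        have h5 : dist (ψ s⁻¹ x₀) x₀ ≤ L := hs
        linarith
      have h6 := hrple _ _ dist_nonneg h2
      have h7 := le_max_right L (3*C + rp (L + C))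
      linarith
  set K := C + rp L₁ with hKdef
  have hK0 : 0 ≤ K := add_nonneg hC (hrp0 _ hL₁0)
  have hmulstep : ∀ (γ s : G), s ∈ S → dist (ψ (γ * s) x₀) (ψ γ x₀) ≤ K := by
    intro γ s hs
    have t1 : dist (ψ (γ * s) x₀) (ψ γ (ψ s x₀)) ≤ C := hψm γ s x₀
    have t2 : dist (ψ γ (ψ s x₀)) (ψ γ x₀) ≤ rp (dist (ψ s x₀) x₀) := (hemb γ _ _).2
    have t3 : rp (dist (ψ s x₀) x₀) ≤ rp L₁ := hrple _ _ dist_nonneg (hstepS s hs)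
    have t4 := dist_triangle (ψ (γ*s) x₀) (ψ γ (ψ s x₀)) (ψ γ x₀)
    rw [hKdef]; linarith
  have hlist : ∀ l : List G, (∀ s ∈ l, s ∈ S) → ∀ γ : G,
      dist (ψ (γ * l.prod) x₀) (ψ γ x₀) ≤ K * l.length := by
    intro l
    induction l with
    | nil => intro _ γ; simp
    | cons a l ih =>
      intro hmem γ
      have ha : a ∈ S := hmem a List.mem_cons_self
      have h1 := ih (fun s hs => hmem s (List.mem_cons_of_mem a hs)) (γ * a)
      have h2 := hmulstep γ a ha
      rw [List.prod_cons, ← mul_assoc]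
      have h3 := dist_triangle (ψ (γ * a * l.prod) x₀) (ψ (γ * a) x₀) (ψ γ x₀)
      simp only [List.length_cons]
      push_cast
      linarith
  have hupper : ∀ g h : G, dist (ψ g x₀) (ψ h x₀) ≤ K * wordDist S g h := by
    intro g h
    obtain ⟨l, hlen, hmem, hprod⟩ := Nat.sInf_mem (hWne g h)
    have hgh : g * l.prod = h := by rw [hprod]; group
    have h1 := hlist l hmem g
    rw [hgh] at h1
    have h2 : wordDist S g h = (l.length : ℝ) := by rw [hwd, ← hlen]
    rw [dist_comm, h2]
    exact h1
  -- lower bound data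
  have hwd1 : ∀ g h : G, wordDist S g h = wordDist S 1 (g⁻¹ * h) := by
    intro g h; simp [wordDist]
  set F : ℝ → ℝ := fun D => sSup ((fun γ => wordDist S 1 γ) '' {γ : G | dist (ψ γ x₀) x₀ ≤ D})
    with hFdef
  have hF0 : ∀ D, 0 ≤ F D := by
    intro D
    apply Real.sSup_nonneg
    rintro x ⟨γ, -, rfl⟩
    exact hwd_nonneg 1 γ
  have hFle : ∀ (γ : G) (D : ℝ), dist (ψ γ x₀) x₀ ≤ D → wordDist S 1 γ ≤ F D := by
    intro γ D hγ
    exact le_csSup ((hfin D).image _).bddAbove ⟨γ, hγ, rfl⟩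
  have hFmono : ∀ D D' : ℝ, D ≤ D' → F D ≤ F D' := by
    intro D D' hDD
    apply Real.sSup_le _ (hF0 D')
    rintro x ⟨γ, hγ, rfl⟩
    exact hFle γ D' (le_trans hγ hDD)
  set F' : ℝ → ℝ := fun d => F (3*C + rp (max d 0)) + max d 0 with hF'def
  have hF'mono : ∀ d d' : ℝ, d ≤ d' → F' d ≤ F' d' := by
    intro d d' h
    have h1 : max d 0 ≤ max d' 0 := max_le_max h le_rfl
    have h2 : rp (max d 0) ≤ rp (max d' 0) := hrple _ _ (le_max_right _ _) h1
    exact add_le_add (hFmono _ _ (by linarith)) h1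
  have hkey : ∀ g h : G, wordDist S g h ≤ F' (dist (ψ g x₀) (ψ h x₀)) := by
    intro g h
    rw [hwd1]
    have hd0 : (0:ℝ) ≤ dist (ψ g x₀) (ψ h x₀) := dist_nonneg
    have h1 : dist (ψ (g⁻¹ * h) x₀) x₀ ≤ 3*C + rp (max (dist (ψ g x₀) (ψ h x₀)) 0) := by
      rw [max_eq_left hd0]
      exact lemA g h
    have h2 := hFle (g⁻¹*h) _ h1
    have h3 : (0:ℝ) ≤ max (dist (ψ g x₀) (ψ h x₀)) 0 := le_max_right _ _
    show wordDist S 1 (g⁻¹ * h) ≤ F (3*C + rp (max (dist (ψ g x₀) (ψ h x₀)) 0)) +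
      max (dist (ψ g x₀) (ψ h x₀)) 0
    linarith
  set rmW : ℝ → ℝ := fun u => sInf {e : ℝ | 0 ≤ e ∧ u ≤ F' e} with hrmWdef
  have hne' : ∀ u : ℝ, {e : ℝ | 0 ≤ e ∧ u ≤ F' e}.Nonempty := by
    intro u
    refine ⟨max u 0, le_max_right _ _, ?_⟩
    have hmm : max (max u 0) 0 = max u 0 := max_eq_left (le_max_right _ _)
    have : F' (max u 0) = F (3*C + rp (max u 0)) + max u 0 := by rw [hF'def]; simp only; rw [hmm]
    rw [this]
    have := hF0 (3*C + rp (max u 0))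
    have := le_max_left u 0
    linarith
  have hbdd : ∀ u : ℝ, BddBelow {e : ℝ | 0 ≤ e ∧ u ≤ F' e} := fun u => ⟨0, fun e he => he.1⟩
  have hrmW0 : ∀ u, 0 ≤ rmW u := fun u => le_csInf (hne' u) (fun e he => he.1)
  have hrmWmono : Monotone rmW := by
    intro u u' h
    apply csInf_le_csInf (hbdd u) (hne' u')
    intro e he
    exact ⟨he.1, le_trans h he.2⟩
  have hrmWtop : Tendsto rmW atTop atTop := by
    rw [Filter.tendsto_atTop]
    intro b
    filter_upwards [eventually_ge_atTop (F' (max b 0) + 1)] with u hu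
    refine le_csInf (hne' u) ?_
    intro e he
    by_contra hbe
    push_neg at hbe
    have h1 : e ≤ max b 0 := le_trans hbe.le (le_max_left _ _)
    have h2 : F' e ≤ F' (max b 0) := hF'mono _ _ h1
    linarith [he.2]
  have hlower : ∀ g h : G, rmW (wordDist S g h) ≤ dist (ψ g x₀) (ψ h x₀) :=
    fun g h => csInf_le (hbdd _) ⟨dist_nonneg, hkey g h⟩
  refine ⟨S, hSfin, hSsym, hclosure,
    ⟨⟨rmW, fun t => K * t, ⟨hrmWmono.monotoneOn _, ?_, fun r _ => hrmW0 r,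
      fun r hr => mul_nonneg hK0 hr, hrmWtop⟩, fun a₁ a₂ => ⟨hlower a₁ a₂, hupper a₁ a₂⟩⟩,
      ⟨K₀, hK₀, fun y => by obtain ⟨g, hg⟩ := near y; exact ⟨g, by rw [dist_comm]; exact hg⟩⟩⟩⟩
  intro a _ b _ hab
  exact mul_le_mul_of_nonneg_left hab hK0

/-- Generalized Švarc–Milnor: a proper cobounded coarse near-action on a coarsely
connected metric space makes `G` finitely generated, and each orbit map a coarse
equivalence from `G` (with a word metric) to `X`. -/
theorem stmt4 {G X : Type*} [Group G] [MetricSpace X]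
    (hX : IsCoarselyConnected X) (rm rp : ℝ → ℝ) (C : ℝ) (ψ : G → X → X)
    (hψ : IsCoarseNearAction rm rp C ψ)
    (hproper : IsProperNearAction ψ) (hcb : IsCoboundedNearAction ψ) :
    Group.FG G ∧ ∀ x₀ : X, ∃ S : Set G, S.Finite ∧ (∀ s ∈ S, s⁻¹ ∈ S) ∧
      Subgroup.closure S = ⊤ ∧
      IsCoarseEquivPair (wordDist S) dist (fun γ : G => ψ γ x₀) := by
  constructor
  · obtain ⟨z₀, -⟩ := id hcb
    obtain ⟨S, hfin, -, hcl, -⟩ := SM_main hX rm rp C ψ hψ hproper hcb z₀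
    exact Group.fg_iff.2 ⟨S, hcl, hfin⟩
  · exact fun x₀ => SM_main hX rm rp C ψ hψ hproper hcb x₀
end

section
/- Let G be a group equipped with a proper left-invariant metric δ (left-invariant, and every closed δ-ball is a finite set), let (X,d) be a metric space, let f₁ : G → X be a (ρ₋,ρ₊)-coarse embedding that is C-surjective, and let f₂ : X → G be a (σ₋,σ₊)-coarse embedding with d(x, f₁(f₂(x))) ≤ C for all x ∈ X and δ(γ, f₂(f₁(γ))) ≤ C for all γ ∈ G. Define ψ(γ)(x) = f₁(γ·f₂(x)). Then ψ is proper: for every R > 0 there exists M ∈ ℕ such that for all x, y ∈ X the set {γ ∈ G : ψ(γ)(B[x,R]) ∩ B[y,R] ≠ ∅} has at most M elements, where B[x,R] denotes the closed metric ball. -/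
open Metric Filter

/-- The conjugated near-action is proper when `G` carries a proper left-invariant
metric. -/
theorem stmt10 {G X : Type*} [Group G] [MetricSpace G] [MetricSpace X]
    (hinv : ∀ γ g₁ g₂ : G, dist (γ * g₁) (γ * g₂) = dist g₁ g₂)
    (hproperG : ∀ (g : G) (r : ℝ), (closedBall g r).Finite)
    (rm rp sm sp : ℝ → ℝ) (hr : ControlFns rm rp) (hs : ControlFns sm sp) (C : ℝ)
    (f₁ : G → X) (hf₁ : IsCoarseEmbeddingWith rm rp f₁)
    (hsurj : ∀ y : X, ∃ γ : G, dist y (f₁ γ) ≤ C)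
    (f₂ : X → G) (hf₂ : IsCoarseEmbeddingWith sm sp f₂)
    (hf₂x : ∀ x : X, dist x (f₁ (f₂ x)) ≤ C)
    (hf₂γ : ∀ γ : G, dist γ (f₂ (f₁ γ)) ≤ C)
    (ψ : G → X → X) (hψdef : ∀ (γ : G) (x : X), ψ γ x = f₁ (γ * f₂ x)) :
    ∀ R : ℝ, 0 < R → ∃ M : ℕ, ∀ x y : X,
      {γ : G | ∃ z ∈ closedBall x R, ψ γ z ∈ closedBall y R}.encard ≤ (M : ℕ∞) := by
  obtain ⟨hsm, hsp, hsm0, hsp0, _⟩ := hs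
  intro R hR
  set K₁ := C + sp R with hK₁
  set K₂ := sp R with hK₂
  have hfin : ((closedBall (1:G) K₁) ×ˢ (closedBall (1:G) K₂)).Finite :=
    (hproperG 1 K₁).prod (hproperG 1 K₂)
  refine ⟨hfin.toFinset.card, fun x y => ?_⟩
  have hsub : {γ : G | ∃ z ∈ closedBall x R, ψ γ z ∈ closedBall y R} ⊆
      (fun p : G × G => (f₂ y * p.1) * (f₂ x * p.2)⁻¹) ''
        ((closedBall (1:G) K₁) ×ˢ (closedBall (1:G) K₂)) := by
    rintro γ ⟨z, hz, hψz⟩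
    rw [hψdef, mem_closedBall] at hψz
    rw [mem_closedBall] at hz
    refine ⟨((f₂ y)⁻¹ * (γ * f₂ z), (f₂ x)⁻¹ * f₂ z), ⟨?_, ?_⟩, by dsimp only; group⟩
    · rw [mem_closedBall]
      have : dist ((f₂ y)⁻¹ * (γ * f₂ z)) 1 = dist (γ * f₂ z) (f₂ y) := by
        rw [← hinv (f₂ y) ((f₂ y)⁻¹ * (γ * f₂ z)) 1, mul_inv_cancel_left, mul_one]
      rw [this, hK₁]
      calc dist (γ * f₂ z) (f₂ y)
          ≤ dist (γ * f₂ z) (f₂ (f₁ (γ * f₂ z))) + dist (f₂ (f₁ (γ * f₂ z))) (f₂ y) :=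
            dist_triangle _ _ _
        _ ≤ C + sp R := by
            refine add_le_add (hf₂γ _) ?_
            refine le_trans (hf₂ (f₁ (γ * f₂ z)) y).2 ?_
            exact hsp dist_nonneg (le_of_lt hR) hψz
    · rw [mem_closedBall]
      have : dist ((f₂ x)⁻¹ * f₂ z) 1 = dist (f₂ z) (f₂ x) := by
        rw [← hinv (f₂ x) ((f₂ x)⁻¹ * f₂ z) 1, mul_inv_cancel_left, mul_one]
      rw [this, hK₂]
      exact le_trans (hf₂ z x).2 (hsp dist_nonneg (le_of_lt hR) hz)
  calc {γ : G | ∃ z ∈ closedBall x R, ψ γ z ∈ closedBall y R}.encard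
      ≤ _ := Set.encard_mono hsub
    _ ≤ ((closedBall (1:G) K₁) ×ˢ (closedBall (1:G) K₂)).encard := Set.encard_image_le _ _
    _ = (hfin.toFinset.card : ℕ∞) := hfin.encard_eq_coe_toFinset_card
end

section
/- Let G be a countable group equipped with a proper left-invariant metric δ (left-invariant, and every closed δ-ball is a finite set), and suppose a metric space (X,d) is coarsely equivalent to (G,δ), i.e. there is a coarse equivalence f : (G,δ) → (X,d). Then there exist nondecreasing functions τ₋, τ₊ : [0,∞) → [0,∞) with τ₋(r) → ∞ as r → ∞ and a constant C' ≥ 0 such that X admits a proper, cobounded (τ₋,τ₊,C')-coarse near-action by G. -/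
open Metric Filter

/-- If a metric space `X` is coarsely equivalent to a countable group `G` carrying a
proper left-invariant metric, then `X` admits a proper cobounded coarse near-action
by `G`. -/
theorem stmt11 {G X : Type*} [Group G] [Countable G] [MetricSpace G] [MetricSpace X]
    (hinv : ∀ γ g₁ g₂ : G, dist (γ * g₁) (γ * g₂) = dist g₁ g₂)
    (hproperG : ∀ (g : G) (r : ℝ), (closedBall g r).Finite)
    (f : G → X) (hf : IsCoarseEquivPair dist dist f) :
    ∃ (tm tp : ℝ → ℝ) (C' : ℝ) (ψ : G → X → X),
      IsCoarseNearAction tm tp C' ψ ∧ IsProperNearAction ψ ∧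
        IsCoboundedNearAction ψ := by
  obtain ⟨⟨rm, rp, ⟨hrmMono, hrpMono, hrm0, hrp0, hrmTop⟩, hfemb⟩, C, hC0, hCsurj⟩ := hf
  choose g hg using hCsurj
  -- The "inverse" of rm
  have hSne : ∀ t : ℝ, {r : ℝ | 0 ≤ r ∧ t < rm r}.Nonempty := by
    intro t
    obtain ⟨r₀, hr₀⟩ := (tendsto_atTop_atTop.mp hrmTop) (t + 1)
    exact ⟨max r₀ 0, le_max_right _ _, by
      have := hr₀ (max r₀ 0) (le_max_left _ _); linarith⟩
  set N : ℝ → ℝ := fun t => sInf {r : ℝ | 0 ≤ r ∧ t < rm r} with hNdef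
  have hNbdd : ∀ t : ℝ, BddBelow {r : ℝ | 0 ≤ r ∧ t < rm r} := fun t => ⟨0, fun r hr => hr.1⟩
  have hN0 : ∀ t, 0 ≤ N t := fun t => le_csInf (hSne t) fun r hr => hr.1
  have hNkey : ∀ t d, 0 ≤ d → rm d ≤ t → d ≤ N t := by
    intro t d hd hdt
    by_contra h
    push_neg at h
    obtain ⟨r, hr, hrd⟩ := (csInf_lt_iff (hNbdd t) (hSne t)).mp h
    have : rm r ≤ rm d := hrmMono hr.1 hd hrd.le
    have := hr.2
    linarith
  have hNmono : Monotone N := fun t t' h =>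
    csInf_le_csInf (hNbdd t) (hSne t') fun r hr => ⟨hr.1, lt_of_le_of_lt h hr.2⟩
  -- the near action
  set ψ : G → X → X := fun γ x => f (γ * g x) with hψdef
  -- basic facts
  have hlow : ∀ (γ : G) (x y : X),
      rm (dist (g x) (g y)) ≤ dist (ψ γ x) (ψ γ y) := by
    intro γ x y
    have := (hfemb (γ * g x) (γ * g y)).1
    rwa [hinv] at this
  have hgdist : ∀ x y : X, dist (g x) (g y) ≤ N (dist x y + 2 * C) := by
    intro x y
    apply hNkey _ _ dist_nonneg
    have h1 : rm (dist (g x) (g y)) ≤ dist (f (g x)) (f (g y)) := (hfemb _ _).1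
    have h2 : dist (f (g x)) (f (g y)) ≤ dist (f (g x)) x + dist x y + dist y (f (g y)) :=
      dist_triangle4 _ _ _ _
    have h3 := hg x
    have h4 := hg y
    rw [dist_comm (f (g x)) x] at h2
    linarith
  have hup : ∀ (γ : G) (x y : X),
      dist (ψ γ x) (ψ γ y) ≤ rp (N (dist x y + 2 * C)) := by
    intro γ x y
    have h1 : dist (ψ γ x) (ψ γ y) ≤ rp (dist (γ * g x) (γ * g y)) := (hfemb _ _).2
    rw [hinv] at h1
    exact h1.trans (hrpMono dist_nonneg (hN0 _) (hgdist x y))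
  have hback : ∀ x y : X, dist x y ≤ rp (dist (g x) (g y)) + 2 * C := by
    intro x y
    have h2 : dist x y ≤ dist x (f (g x)) + dist (f (g x)) (f (g y)) + dist (f (g y)) y :=
      dist_triangle4 _ _ _ _
    have h1 := (hfemb (g x) (g y)).2
    have h3 := hg x
    have h4 := hg y
    rw [dist_comm (f (g y)) y] at h2
    linarith
  -- the lower control
  have hIne : ∀ t : ℝ, {d : ℝ | 0 ≤ d ∧ t ≤ rp d + 2 * C + d}.Nonempty := by
    intro t
    refine ⟨max t 0, le_max_right _ _, ?_⟩
    have h1 : 0 ≤ rp (max t 0) := hrp0 _ (le_max_right _ _)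
    have h2 := le_max_left t 0
    linarith
  have hIbdd : ∀ t : ℝ, BddBelow {d : ℝ | 0 ≤ d ∧ t ≤ rp d + 2 * C + d} :=
    fun t => ⟨0, fun d hd => hd.1⟩
  set I : ℝ → ℝ := fun t => sInf {d : ℝ | 0 ≤ d ∧ t ≤ rp d + 2 * C + d} with hIdef
  have hI0 : ∀ t, 0 ≤ I t := fun t => le_csInf (hIne t) fun d hd => hd.1
  have hImono : Monotone I := fun t t' h =>
    csInf_le_csInf (hIbdd t) (hIne t') fun d hd => ⟨hd.1, le_trans h hd.2⟩
  have hIle : ∀ t d, 0 ≤ d → t ≤ rp d + 2 * C + d → I t ≤ d :=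
    fun t d h1 h2 => csInf_le (hIbdd t) ⟨h1, h2⟩
  have hItop : Tendsto I atTop atTop := by
    rw [tendsto_atTop_atTop]
    intro b
    refine ⟨rp (max b 0) + 2 * C + max b 0 + 1, fun t ht => ?_⟩
    refine le_trans (le_max_left b 0) (le_csInf (hIne t) fun d hd => ?_)
    by_contra hlt
    push_neg at hlt
    have h1 : rp d ≤ rp (max b 0) := hrpMono hd.1 (le_max_right b 0) hlt.le
    have h2 := hd.2
    linarith
  set tm : ℝ → ℝ := fun t => rm (I t) with htmdef
  set tp : ℝ → ℝ := fun t => rp (N (t + 2 * C)) with htpdef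
  have hctrl : ControlFns tm tp := by
    refine ⟨fun a _ b _ hab => hrmMono (hI0 a) (hI0 b) (hImono hab),
      fun a _ b _ hab => hrpMono (hN0 _) (hN0 _) (hNmono (by linarith)),
      fun r _ => hrm0 _ (hI0 r), fun r _ => hrp0 _ (hN0 _), ?_⟩
    exact hrmTop.comp hItop
  refine ⟨tm, tp, max C (rp (N C)), ψ, ⟨hctrl, le_trans hC0 (le_max_left _ _), ⟨?_, ?_⟩, ?_⟩,
    ?_, ?_⟩
  · -- unit bound
    intro x
    have : dist (ψ 1 x) x = dist x (f (g x)) := by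
      simp only [hψdef, one_mul, dist_comm]
    rw [this]
    exact le_trans (hg x) (le_max_left _ _)
  · -- composition bound
    intro γ₁ γ₂ x
    refine le_trans ?_ (le_max_right C _)
    set a := γ₂ * g x with ha
    set b := g (f a) with hb
    have h1 : dist (f a) (f b) ≤ C := hg (f a)
    have h2 : rm (dist a b) ≤ dist (f a) (f b) := (hfemb a b).1
    have h3 : dist a b ≤ N C := hNkey C _ dist_nonneg (h2.trans h1)
    have h4 : dist (f (γ₁ * a)) (f (γ₁ * b)) ≤ rp (dist (γ₁ * a) (γ₁ * b)) := (hfemb _ _).2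
    rw [hinv] at h4
    have h5 : dist (ψ (γ₁ * γ₂) x) (ψ γ₁ (ψ γ₂ x)) = dist (f (γ₁ * a)) (f (γ₁ * b)) := by
      simp only [hψdef, ha, hb, mul_assoc]
    rw [h5]
    exact h4.trans (hrpMono dist_nonneg (hN0 _) h3)
  · -- each ψ γ is a coarse embedding
    intro γ x y
    constructor
    · have h1 : I (dist x y) ≤ dist (g x) (g y) := by
        refine hIle _ _ dist_nonneg ?_
        have := hback x y
        have := dist_nonneg (x := g x) (y := g y)
        linarith
      exact le_trans (hrmMono (hI0 _) dist_nonneg h1) (hlow γ x y)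
    · exact hup γ x y
  · -- properness
    intro R hR
    set r₀ : ℝ := N (R + 2 * C) with hr₀def
    set Q : ℝ := rp r₀ + R with hQdef
    set r₁ : ℝ := N (2 * Q) with hr₁def
    refine ⟨((hproperG 1 r₁).toFinset.card), fun x y => ?_⟩
    set T : Set G := {γ : G | ∃ z ∈ closedBall x R, ψ γ z ∈ closedBall y R} with hTdef
    rcases T.eq_empty_or_nonempty with hT | ⟨γ₀, hγ₀⟩
    · simp [hT]
    · -- key: for γ ∈ T, dist (f (γ * g x)) y ≤ Q
      have key : ∀ γ ∈ T, dist (f (γ * g x)) y ≤ Q := by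
        intro γ hγ
        obtain ⟨z, hz, hz'⟩ := hγ
        rw [mem_closedBall] at hz hz'
        have hgz : dist (g z) (g x) ≤ r₀ := by
          apply hNkey _ _ dist_nonneg
          have h1 : rm (dist (g z) (g x)) ≤ dist (f (g z)) (f (g x)) := (hfemb _ _).1
          have h2 : dist (f (g z)) (f (g x)) ≤ dist (f (g z)) z + dist z x + dist x (f (g x)) :=
            dist_triangle4 _ _ _ _
          have h3 := hg z
          have h4 := hg x
          rw [dist_comm (f (g z)) z] at h2
          linarith
        have h5 : dist (f (γ * g x)) (f (γ * g z)) ≤ rp (dist (γ * g x) (γ * g z)) :=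
          (hfemb _ _).2
        rw [hinv] at h5
        have h6 : rp (dist (g x) (g z)) ≤ rp r₀ := by
          rw [dist_comm]
          exact hrpMono dist_nonneg (hN0 _) hgz
        have h7 : dist (f (γ * g x)) y ≤ dist (f (γ * g x)) (f (γ * g z)) + dist (ψ γ z) y :=
          dist_triangle _ _ _
        simp only [hψdef] at h7 hz'
        linarith
      have hmem : ∀ γ ∈ T, dist (γ * g x) (γ₀ * g x) ≤ r₁ := by
        intro γ hγ
        apply hNkey _ _ dist_nonneg
        have h1 : rm (dist (γ * g x) (γ₀ * g x)) ≤ dist (f (γ * g x)) (f (γ₀ * g x)) :=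
          (hfemb _ _).1
        have h2 : dist (f (γ * g x)) (f (γ₀ * g x)) ≤
            dist (f (γ * g x)) y + dist y (f (γ₀ * g x)) := dist_triangle _ _ _
        have h3 := key γ hγ
        have h4 := key γ₀ hγ₀
        rw [dist_comm y] at h2
        linarith
      -- inject T into closedBall 1 r₁
      set h : G → G := fun γ => (γ₀ * g x)⁻¹ * (γ * g x) with hhdef
      have hinj : Set.InjOn h T := by
        intro a _ b _ hab
        simpa [hhdef] using hab
      have himg : h '' T ⊆ closedBall (1 : G) r₁ := by
        rintro _ ⟨γ, hγ, rfl⟩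
        rw [mem_closedBall]
        have : dist ((γ₀ * g x)⁻¹ * (γ * g x)) ((γ₀ * g x)⁻¹ * (γ₀ * g x)) =
            dist (γ * g x) (γ₀ * g x) := hinv _ _ _
        rw [inv_mul_cancel] at this
        rw [this]
        exact hmem γ hγ
      calc T.encard = (h '' T).encard := (hinj.encard_image).symm
        _ ≤ (closedBall (1 : G) r₁).encard := Set.encard_mono himg
        _ = ((hproperG 1 r₁).toFinset.card : ℕ∞) := (hproperG 1 r₁).encard_eq_coe_toFinset_card
  · -- coboundedness
    refine ⟨f 1, rp (N C) + C + 1, by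
      have := hrp0 _ (hN0 C); linarith, fun y => ?_⟩
    refine ⟨g y, ?_⟩
    set b := g (f 1) with hbdef
    have h1 : rm (dist b 1) ≤ dist (f b) (f 1) := (hfemb _ _).1
    have h2 : dist (f b) (f 1) ≤ C := by rw [dist_comm]; exact hg (f 1)
    have h3 : dist b 1 ≤ N C := hNkey C _ dist_nonneg (h1.trans h2)
    have h4 : dist (f (g y * b)) (f (g y * 1)) ≤ rp (dist (g y * b) (g y * 1)) := (hfemb _ _).2
    rw [hinv] at h4
    have h5 : rp (dist b 1) ≤ rp (N C) := hrpMono dist_nonneg (hN0 _) h3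
    have h6 : dist (ψ (g y) (f 1)) y ≤ dist (f (g y * b)) (f (g y * 1)) + dist (f (g y * 1)) y := by
      simp only [hψdef, hbdef]
      exact dist_triangle _ _ _
    have h7 : dist (f (g y * 1)) y ≤ C := by rw [mul_one, dist_comm]; exact hg y
    linarith
end

section
/- (Generalized Švarc–Milnor with converse.) Let (X,d) be a coarsely connected metric space and let G be a finitely generated group with word metric d_S for some finite symmetric generating set S. Then X admits a proper, cobounded coarse near-action by G if and only if (X,d) is coarsely equivalent to (G,d_S), i.e. there exists a coarse equivalence f : (G,d_S) → (X,d). -/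
open Metric Filter
open scoped Classical

section Helpers
variable {G : Type*} [Group G] {S : Set G}

noncomputable def natWD (S : Set G) (g h : G) : ℕ :=
  sInf {n : ℕ | ∃ l : List G, l.length = n ∧ (∀ x ∈ l, x ∈ S) ∧ l.prod = g⁻¹ * h}

lemma wordDist_eq (S : Set G) (g h : G) : wordDist S g h = (natWD S g h : ℝ) := rfl

lemma wordDist_nonneg (S : Set G) (g h : G) : 0 ≤ wordDist S g h := Nat.cast_nonneg _

lemma natWD_mul_left (S : Set G) (γ g h : G) : natWD S (γ*g) (γ*h) = natWD S g h := by
  unfold natWD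
  rw [show (γ*g)⁻¹*(γ*h) = g⁻¹*h by group]

lemma wordDist_mul_left (S : Set G) (γ g h : G) : wordDist S (γ*g) (γ*h) = wordDist S g h := by
  rw [wordDist_eq, wordDist_eq, natWD_mul_left]

lemma natWD_one (S : Set G) (g h : G) : natWD S 1 (g⁻¹*h) = natWD S g h := by
  unfold natWD
  rw [show (1:G)⁻¹*(g⁻¹*h) = g⁻¹*h by group]

lemma wordDist_one (S : Set G) (g h : G) : wordDist S 1 (g⁻¹*h) = wordDist S g h := by
  rw [wordDist_eq, wordDist_eq, natWD_one]

lemma exists_word_of_gen (hSsymm : ∀ s ∈ S, s⁻¹ ∈ S) (hSgen : Subgroup.closure S = ⊤)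
    (g h : G) : ∃ l : List G, (∀ x ∈ l, x ∈ S) ∧ l.prod = g⁻¹ * h := by
  suffices key : ∀ x : G, x ∈ Subgroup.closure S → ∃ l : List G, (∀ y ∈ l, y ∈ S) ∧ l.prod = x by
    exact key (g⁻¹ * h) (by rw [hSgen]; trivial)
  intro x hx
  induction hx using Subgroup.closure_induction with
  | mem x hxS => exact ⟨[x], by simpa using hxS, by simp⟩
  | one => exact ⟨[], by simp, by simp⟩
  | mul x y _ _ hx hy =>
      obtain ⟨l₁, h₁, p₁⟩ := hx
      obtain ⟨l₂, h₂, p₂⟩ := hy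
      refine ⟨l₁ ++ l₂, ?_, by simp [p₁, p₂]⟩
      intro a ha
      rcases List.mem_append.1 ha with h | h
      exacts [h₁ a h, h₂ a h]
  | inv x _ hx =>
      obtain ⟨l, hl, pl⟩ := hx
      refine ⟨(l.map (·⁻¹)).reverse, ?_, ?_⟩
      · intro a ha
        simp only [List.mem_reverse, List.mem_map] at ha
        obtain ⟨b, hb, rfl⟩ := ha
        exact hSsymm b (hl b hb)
      · rw [List.prod_reverse_noncomm]
        simp only [List.map_map]
        simp [pl]

lemma exists_min_word (hSsymm : ∀ s ∈ S, s⁻¹ ∈ S) (hSgen : Subgroup.closure S = ⊤)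
    (g h : G) : ∃ l : List G, l.length = natWD S g h ∧ (∀ x ∈ l, x ∈ S) ∧ l.prod = g⁻¹ * h := by
  have : {n : ℕ | ∃ l : List G, l.length = n ∧ (∀ x ∈ l, x ∈ S) ∧ l.prod = g⁻¹ * h}.Nonempty := by
    obtain ⟨l, hl, pl⟩ := exists_word_of_gen hSsymm hSgen g h
    exact ⟨l.length, l, rfl, hl, pl⟩
  exact Nat.sInf_mem this

lemma natWD_le (g h : G) {l : List G} (hl : ∀ x ∈ l, x ∈ S) (pl : l.prod = g⁻¹ * h) :
    natWD S g h ≤ l.length := Nat.sInf_le ⟨l, rfl, hl, pl⟩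

lemma ball_finite (hSfin : S.Finite) (hSsymm : ∀ s ∈ S, s⁻¹ ∈ S)
    (hSgen : Subgroup.closure S = ⊤) (T : ℝ) :
    {g : G | wordDist S 1 g ≤ T}.Finite := by
  have : Finite ↥S := hSfin
  refine ((List.finite_length_le ↥S ⌈T⌉₊).image
    (fun l : List ↥S => (l.map ((↑) : ↥S → G)).prod)).subset ?_
  intro x hx
  obtain ⟨l, hlen, hmem, hprod⟩ := exists_min_word hSsymm hSgen 1 x
  refine ⟨l.attach.map (fun a => (⟨a.1, hmem a.1 a.2⟩ : ↥S)), ?_, ?_⟩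
  · simp only [Set.mem_setOf_eq, List.length_map, List.length_attach]
    rw [hlen]
    have hx' : (natWD S 1 x : ℝ) ≤ T := hx
    calc natWD S 1 x = ⌈((natWD S 1 x : ℕ) : ℝ)⌉₊ := by simp
      _ ≤ ⌈T⌉₊ := Nat.ceil_le_ceil hx'
  · simp only [List.map_map]
    have : (l.attach.map fun a => ((⟨a.1, hmem a.1 a.2⟩ : ↥S) : G)) = l := by
      simp
    calc (List.map (Subtype.val ∘ fun a => (⟨a.1, hmem a.1 a.2⟩ : ↥S)) l.attach).prod
        = (List.map (fun a : {x // x ∈ l} => a.1) l.attach).prod := by rfl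
      _ = l.prod := by rw [List.attach_map_subtype_val]
      _ = x := by simpa using hprod

lemma exists_rm_inv {rm : ℝ → ℝ} (h : Tendsto rm atTop atTop) (b : ℝ) :
    ∃ n : ℕ, ∀ s : ℝ, (n : ℝ) ≤ s → b < rm s := by
  obtain ⟨a, ha⟩ := eventually_atTop.1 (tendsto_atTop.1 h (b+1))
  exact ⟨⌈a⌉₊, fun s hs => lt_of_lt_of_le (by linarith) (ha s (le_trans (Nat.le_ceil a) hs))⟩

end Helpers

theorem dir_mp {G X : Type*} [Group G] [MetricSpace X]
    (S : Set G) (hSfin : S.Finite) (hSsymm : ∀ s ∈ S, s⁻¹ ∈ S)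
    (hSgen : Subgroup.closure S = ⊤)
    (h : ∃ (rm rp : ℝ → ℝ) (C : ℝ) (ψ : G → X → X),
        IsCoarseNearAction rm rp C ψ ∧ IsProperNearAction ψ ∧ IsCoboundedNearAction ψ) :
    ∃ f : G → X, IsCoarseEquivPair (wordDist S) dist f := by
  obtain ⟨rm, rp, C, ψ, ⟨⟨hrmM, hrpM, hrm0, hrp0, hrmT⟩, hC, ⟨hψ1, hψmul⟩, hemb⟩,
    hproper, x₀, R₀, hR₀, hcob⟩ := h
  set f : G → X := fun γ => ψ γ x₀ with hfdef
  have hsurj : ∀ y : X, ∃ γ : G, dist y (f γ) ≤ R₀ := by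
    intro y
    obtain ⟨γ, hγ⟩ := hcob y
    exact ⟨γ, by rw [dist_comm]; exact hγ.le⟩
  -- upper bound
  obtain ⟨K, hK⟩ := (hSfin.image (fun s => dist (ψ s x₀) x₀)).bddAbove
  set K' : ℝ := max K 0 with hK'def
  have hK' : ∀ s ∈ S, dist (ψ s x₀) x₀ ≤ K' :=
    fun s hs => le_trans (hK (Set.mem_image_of_mem _ hs)) (le_max_left _ _)
  set A : ℝ := C + rp K' with hAdef
  have hA0 : 0 ≤ A := add_nonneg hC (hrp0 _ (le_max_right _ _))
  have key : ∀ l : List G, (∀ x ∈ l, x ∈ S) → ∀ γ : G,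
      dist (ψ (γ * l.prod) x₀) (ψ γ x₀) ≤ l.length * A := by
    intro l
    induction l with
    | nil => intro _ γ; simp
    | cons s t ih =>
      intro hmem γ
      have hs : s ∈ S := hmem s List.mem_cons_self
      have ht : ∀ x ∈ t, x ∈ S := fun x hx => hmem x (List.mem_cons_of_mem s hx)
      have h1 : dist (ψ ((γ*s) * t.prod) x₀) (ψ (γ*s) x₀) ≤ t.length * A := ih ht (γ*s)
      have h2 : dist (ψ (γ*s) x₀) (ψ γ (ψ s x₀)) ≤ C := by
        have := hψmul γ s x₀
        rwa [] at this
      have h3 : dist (ψ γ (ψ s x₀)) (ψ γ x₀) ≤ rp (dist (ψ s x₀) x₀) := (hemb γ _ _).2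
      have h4 : rp (dist (ψ s x₀) x₀) ≤ rp K' :=
        hrpM (Set.mem_Ici.2 dist_nonneg) (Set.mem_Ici.2 (le_max_right K 0)) (hK' s hs)
      have h5 : dist (ψ ((γ*s)*t.prod) x₀) (ψ γ x₀) ≤ t.length * A + C + rp K' := by
        calc dist (ψ ((γ*s)*t.prod) x₀) (ψ γ x₀)
            ≤ dist (ψ ((γ*s)*t.prod) x₀) (ψ (γ*s) x₀) + dist (ψ (γ*s) x₀) (ψ γ (ψ s x₀)) +
              dist (ψ γ (ψ s x₀)) (ψ γ x₀) := dist_triangle4 _ _ _ _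
          _ ≤ _ := by linarith
      have hassoc : γ * (s :: t).prod = (γ*s) * t.prod := by rw [List.prod_cons, mul_assoc]
      rw [hassoc]
      have hlen : (((s::t).length : ℕ) : ℝ) * A = (t.length : ℝ) * A + A := by
        push_cast [List.length_cons]
        ring
      rw [hlen]
      linarith
  have hupper : ∀ γ γ' : G, dist (f γ) (f γ') ≤ wordDist S γ γ' * A := by
    intro γ γ'
    obtain ⟨l, hlen, hmem, hprod⟩ := exists_min_word hSsymm hSgen γ γ'
    have hγ' : γ * l.prod = γ' := by rw [hprod]; group
    have := key l hmem γ
    rw [hγ'] at this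
    rw [dist_comm, wordDist_eq, ← hlen]
    exact this
  -- lower bound via properness
  have C1 : ∀ r : ℝ, ∃ N : ℝ, 0 ≤ N ∧
      ∀ γ γ' : G, dist (f γ) (f γ') ≤ r → wordDist S γ γ' ≤ N := by
    intro r
    obtain ⟨T, hT⟩ := exists_rm_inv hrmT (r + C)
    have hRpos : (0:ℝ) < (T:ℝ) + 1 := by positivity
    obtain ⟨M, hM⟩ := hproper ((T:ℝ)+1) hRpos
    set Fs : Set G := {δ : G | ∃ z ∈ closedBall x₀ ((T:ℝ)+1), ψ δ z ∈ closedBall x₀ ((T:ℝ)+1)}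
      with hFs
    have hFsfin : Fs.Finite := by
      rw [← Set.encard_lt_top_iff]
      exact lt_of_le_of_lt (hM x₀ x₀) (WithTop.coe_lt_top M)
    obtain ⟨N₀, hN₀⟩ := (hFsfin.image (fun δ => wordDist S 1 δ)).bddAbove
    refine ⟨max N₀ 0, le_max_right _ _, fun γ γ' hd => ?_⟩
    set δ : G := γ⁻¹ * γ' with hδ
    have h1 : rm (dist (ψ δ x₀) x₀) ≤ dist (ψ γ (ψ δ x₀)) (ψ γ x₀) := (hemb γ _ _).1
    have h2 : dist (ψ γ (ψ δ x₀)) (ψ γ x₀) ≤ C + r := by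
      have hmul := hψmul γ δ x₀
      have hγδ : γ * δ = γ' := by rw [hδ]; group
      rw [hγδ] at hmul
      calc dist (ψ γ (ψ δ x₀)) (ψ γ x₀)
          ≤ dist (ψ γ (ψ δ x₀)) (ψ γ' x₀) + dist (ψ γ' x₀) (ψ γ x₀) := dist_triangle _ _ _
        _ ≤ C + r := add_le_add (by rw [dist_comm]; exact hmul) (by rw [dist_comm]; exact hd)
    have h3 : dist (ψ δ x₀) x₀ ≤ (T:ℝ) + 1 := by
      by_contra hlt
      push_neg at hlt
      have := hT (dist (ψ δ x₀) x₀) (by linarith)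
      linarith
    have hδF : δ ∈ Fs := ⟨x₀, by simp [mem_closedBall, hRpos.le], mem_closedBall.2 h3⟩
    have hle : wordDist S 1 δ ≤ N₀ := hN₀ (Set.mem_image_of_mem _ hδF)
    have heq : wordDist S γ γ' = wordDist S 1 δ := (wordDist_one S γ γ').symm
    rw [heq]
    exact le_trans hle (le_max_left _ _)
  choose g' hg'0 hg' using fun k : ℕ => C1 (k : ℝ)
  set H : ℕ → ℝ := fun k => (Finset.range (k+1)).sup' Finset.nonempty_range_add_one g' with hHdef
  have hgH : ∀ k, g' k ≤ H k := fun k => Finset.le_sup' g' (Finset.self_mem_range_succ k)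
  have hHmono : Monotone H := by
    intro a b hab
    exact Finset.sup'_mono g' (Finset.range_subset_range.2 (by omega)) Finset.nonempty_range_add_one
  have key2 : ∀ γ γ' : G, wordDist S γ γ' ≤ H ⌈dist (f γ) (f γ')⌉₊ := by
    intro γ γ'
    exact le_trans (hg' ⌈dist (f γ) (f γ')⌉₊ γ γ' (Nat.le_ceil _)) (hgH _)
  by_cases hb : ∃ B : ℝ, ∀ k : ℕ, H k ≤ B
  · obtain ⟨B, hBb⟩ := hb
    have hwb : ∀ γ γ' : G, wordDist S γ γ' ≤ B := fun γ γ' => le_trans (key2 γ γ') (hBb _)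
    refine ⟨f, ⟨fun u => max (u - B) 0, fun u => u * A,
      ⟨?_, fun a _ b _ hab => mul_le_mul_of_nonneg_right hab hA0,
        fun r _ => le_max_right _ _, fun r hr => mul_nonneg hr hA0, ?_⟩,
      fun γ γ' => ⟨?_, hupper γ γ'⟩⟩, R₀, hR₀.le, hsurj⟩
    · intro a _ b _ hab
      exact max_le_max (by linarith) le_rfl
    · apply tendsto_atTop_mono (fun s => le_max_left (s - B) 0)
      exact tendsto_atTop_add_const_right _ (-B) tendsto_id
    · exact max_le (by linarith [hwb γ γ', (dist_nonneg : (0:ℝ) ≤ dist (f γ) (f γ'))]) dist_nonneg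
  · push_neg at hb
    set A' : ℝ → Set ℝ := fun u => {s : ℝ | 0 ≤ s ∧ u ≤ H ⌈s⌉₊} with hA'def
    have hne : ∀ u, (A' u).Nonempty := by
      intro u
      obtain ⟨k, hk⟩ := hb u
      exact ⟨(k:ℝ), Nat.cast_nonneg k, by rw [Nat.ceil_natCast]; exact hk.le⟩
    have hbdd : ∀ u, BddBelow (A' u) := fun u => ⟨0, fun s hs => hs.1⟩
    refine ⟨f, ⟨fun u => sInf (A' u), fun u => u * A,
      ⟨?_, fun a _ b _ hab => mul_le_mul_of_nonneg_right hab hA0,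
        fun r _ => le_csInf (hne r) (fun s hs => hs.1),
        fun r hr => mul_nonneg hr hA0, ?_⟩,
      fun γ γ' => ⟨?_, hupper γ γ'⟩⟩, R₀, hR₀.le, hsurj⟩
    · intro a _ b _ hab
      exact csInf_le_csInf (hbdd a) (hne b) (fun s hs => ⟨hs.1, le_trans hab hs.2⟩)
    · rw [Filter.tendsto_atTop]
      intro b
      filter_upwards [eventually_gt_atTop (H ⌈b⌉₊)] with u hu
      refine le_csInf (hne u) (fun s hs => ?_)
      by_contra hsb
      push_neg at hsb
      have hm : H ⌈s⌉₊ ≤ H ⌈b⌉₊ := hHmono (Nat.ceil_le_ceil hsb.le)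
      have := hs.2
      linarith
    · exact csInf_le (hbdd _) ⟨dist_nonneg, key2 γ γ'⟩

theorem dir_mpr {G X : Type*} [Group G] [MetricSpace X]
    (S : Set G) (hSfin : S.Finite) (hSsymm : ∀ s ∈ S, s⁻¹ ∈ S)
    (hSgen : Subgroup.closure S = ⊤)
    (hf : ∃ f : G → X, IsCoarseEquivPair (wordDist S) dist f) :
    ∃ (rm rp : ℝ → ℝ) (C : ℝ) (ψ : G → X → X),
        IsCoarseNearAction rm rp C ψ ∧ IsProperNearAction ψ ∧
          IsCoboundedNearAction ψ := by
  obtain ⟨f, ⟨rm, rp, ⟨hrmM, hrpM, hrm0, hrp0, hrmT⟩, hfemb⟩, C₀, hC₀, hsurj⟩ := hf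
  choose g hg using hsurj
  by_cases hbd : ∃ t : ℝ, ∀ n : ℕ, rp n < t
  · -- bounded case: X is bounded, G is finite, use trivial action
    obtain ⟨t, ht⟩ := hbd
    have ht0 : 0 < t := lt_of_le_of_lt (hrp0 0 le_rfl) (by simpa using ht 0)
    set B : ℝ := t + 2 * C₀ with hB
    have hB0 : 0 < B := by positivity
    have hXbd : ∀ x x' : X, dist x x' ≤ B := by
      intro x x'
      have h1 := hg x
      have h2 := hg x'
      have h3 : dist (f (g x)) (f (g x')) ≤ rp (wordDist S (g x) (g x')) :=
        (hfemb (g x) (g x')).2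
      have h4 : rp (wordDist S (g x) (g x')) < t := by
        rw [wordDist_eq]; exact ht _
      calc dist x x' ≤ dist x (f (g x)) + dist (f (g x)) (f (g x')) + dist (f (g x')) x' :=
            dist_triangle4 _ _ _ _
        _ ≤ C₀ + rp (wordDist S (g x) (g x')) + C₀ :=
            add_le_add (add_le_add h1 h3) (by rw [dist_comm]; exact h2)
        _ ≤ B := by linarith
    obtain ⟨D, hD⟩ := exists_rm_inv hrmT t
    have hGbd : ∀ γ : G, wordDist S 1 γ ≤ (D : ℝ) := by
      intro γ
      by_contra hlt
      push_neg at hlt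
      have h1 : rm (wordDist S 1 γ) ≤ dist (f 1) (f γ) := (hfemb 1 γ).1
      have h2 : dist (f 1) (f γ) ≤ rp (wordDist S 1 γ) := (hfemb 1 γ).2
      have h3 : rp (wordDist S 1 γ) < t := by rw [wordDist_eq]; exact ht _
      have h4 := hD (wordDist S 1 γ) hlt.le
      linarith
    have hGfin : (Set.univ : Set G).Finite :=
      (ball_finite hSfin hSsymm hSgen (D : ℝ)).subset (fun γ _ => hGbd γ)
    refine ⟨fun s => max (s - B) 0, id, 0, fun _ x => x,
      ⟨⟨?_, fun a _ b _ h => h, fun r _ => le_max_right _ _, fun r hr => hr, ?_⟩,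
        le_rfl, ⟨fun x => by simp, fun γ₁ γ₂ x => by simp⟩, fun γ x x' => ⟨?_, le_rfl⟩⟩,
      ?_, f 1, B + 1, by linarith, fun y => ⟨1, ?_⟩⟩
    · intro a _ b _ h
      exact max_le_max (by linarith) le_rfl
    · apply tendsto_atTop_mono (fun s => le_max_left (s - B) 0)
      exact tendsto_atTop_add_const_right _ (-B) tendsto_id
    · exact max_le (by linarith [hXbd x x']) dist_nonneg
    · intro R hR
      refine ⟨hGfin.toFinset.card, fun x y => ?_⟩
      calc ({γ : G | ∃ z ∈ closedBall x R, (fun _ x => x : G → X → X) γ z ∈ closedBall y R}).encard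
          ≤ (Set.univ : Set G).encard := Set.encard_mono (Set.subset_univ _)
        _ = hGfin.toFinset.card := by rw [Set.Finite.encard_eq_coe_toFinset_card]
        _ ≤ _ := le_rfl
    · calc dist (f 1) y ≤ B := hXbd _ _
        _ < B + 1 := by linarith
  · -- unbounded case: ψ γ x = f (γ * g x)
    push_neg at hbd
    set F : ℝ → ℕ := fun b => Nat.find (exists_rm_inv hrmT b) with hFdef
    have hF : ∀ b : ℝ, ∀ s : ℝ, (F b : ℝ) ≤ s → b < rm s :=
      fun b => Nat.find_spec (exists_rm_inv hrmT b)
    have hFmono : ∀ b b' : ℝ, b ≤ b' → F b ≤ F b' :=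
      fun b b' h => Nat.find_mono (fun n hn s hs => lt_of_le_of_lt h (hn s hs))
    set Glb : ℝ → ℕ := fun u => Nat.find (hbd (u - 2 * C₀)) with hGlbdef
    have hGlb : ∀ u : ℝ, u - 2 * C₀ ≤ rp (Glb u) := fun u => Nat.find_spec (hbd (u - 2 * C₀))
    have hGlbmin : ∀ (u : ℝ) (m : ℕ), u - 2 * C₀ ≤ rp m → Glb u ≤ m :=
      fun u m hm => Nat.find_min' _ hm
    have hGlbmono : ∀ u u' : ℝ, u ≤ u' → Glb u ≤ Glb u' :=
      fun u u' h => Nat.find_mono (fun n hn => le_trans (by linarith) hn)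
    -- key: word distance bounded by F of metric distance
    have hdS : ∀ (a b : G) (u : ℝ), dist (f a) (f b) ≤ u → wordDist S a b ≤ (F u : ℝ) := by
      intro a b u hu
      by_contra hlt
      push_neg at hlt
      have := hF u (wordDist S a b) hlt.le
      have := (hfemb a b).1
      linarith
    set ψ : G → X → X := fun γ x => f (γ * g x) with hψdef
    set C : ℝ := max C₀ (rp (F C₀)) with hCdef
    have hC0 : 0 ≤ C := le_trans hC₀ (le_max_left _ _)
    refine ⟨fun u => rm (Glb u), fun u => rp (F (u + 2 * C₀)), C, ψ,
      ⟨⟨?_, ?_, fun r _ => hrm0 _ (Nat.cast_nonneg _), fun r _ => hrp0 _ (Nat.cast_nonneg _), ?_⟩,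
        hC0, ⟨?_, ?_⟩, ?_⟩, ?_, ?_⟩
    · -- rm' monotone
      intro a _ b _ hab
      exact hrmM (Set.mem_Ici.2 (Nat.cast_nonneg _)) (Set.mem_Ici.2 (Nat.cast_nonneg _))
        (Nat.cast_le.2 (hGlbmono a b hab))
    · -- rp' monotone
      intro a _ b _ hab
      exact hrpM (Set.mem_Ici.2 (Nat.cast_nonneg _)) (Set.mem_Ici.2 (Nat.cast_nonneg _))
        (Nat.cast_le.2 (hFmono _ _ (by linarith)))
    · -- rm' tendsto atTop
      have hGlbTop : ∀ b : ℝ, ∀ᶠ u in atTop, b ≤ (Glb u : ℝ) := by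
        intro b
        filter_upwards [eventually_gt_atTop (rp (⌈b⌉₊ : ℕ) + 2 * C₀)] with u hu
        have hk : (⌈b⌉₊ : ℕ) < Glb u := by
          by_contra hle
          push_neg at hle
          have h1 : rp (Glb u) ≤ rp (⌈b⌉₊ : ℕ) :=
            hrpM (Set.mem_Ici.2 (Nat.cast_nonneg _)) (Set.mem_Ici.2 (Nat.cast_nonneg _))
              (Nat.cast_le.2 hle)
          have h2 := hGlb u
          linarith
        calc b ≤ (⌈b⌉₊ : ℝ) := Nat.le_ceil b
          _ ≤ (Glb u : ℝ) := by exact_mod_cast hk.le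
      rw [Filter.tendsto_atTop]
      intro b
      obtain ⟨a, ha⟩ := eventually_atTop.1 (tendsto_atTop.1 hrmT b)
      filter_upwards [hGlbTop a] with u hu
      exact ha _ hu
    · -- ψ 1 close to id
      intro x
      have : ψ 1 x = f (g x) := by simp [hψdef]
      rw [this, dist_comm]
      exact le_trans (hg x) (le_max_left _ _)
    · -- near-action composition
      intro γ₁ γ₂ x
      have h1 : ψ (γ₁ * γ₂) x = f (γ₁ * (γ₂ * g x)) := by rw [hψdef]; ring_nf; rw [mul_assoc]
      have h2 : ψ γ₁ (ψ γ₂ x) = f (γ₁ * g (f (γ₂ * g x))) := rfl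
      rw [h1, h2]
      set y := f (γ₂ * g x) with hy
      have hup : dist (f (γ₁ * (γ₂ * g x))) (f (γ₁ * g y)) ≤
          rp (wordDist S (γ₂ * g x) (g y)) := by
        have := (hfemb (γ₁ * (γ₂ * g x)) (γ₁ * g y)).2
        rwa [wordDist_mul_left] at this
      have hds : wordDist S (γ₂ * g x) (g y) ≤ (F C₀ : ℝ) := hdS _ _ _ (hg y)
      have : rp (wordDist S (γ₂ * g x) (g y)) ≤ rp (F C₀) :=
        hrpM (Set.mem_Ici.2 (wordDist_nonneg _ _ _)) (Set.mem_Ici.2 (Nat.cast_nonneg _)) hds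
      exact le_trans hup (le_trans this (le_max_right _ _))
    · -- each ψ γ is a coarse embedding
      intro γ x x'
      have hupfg : dist (f (g x)) (f (g x')) ≤ dist x x' + 2 * C₀ := by
        have h1 := hg x
        have h2 := hg x'
        calc dist (f (g x)) (f (g x')) ≤ dist (f (g x)) x + dist x x' + dist x' (f (g x')) :=
              dist_triangle4 _ _ _ _
          _ ≤ C₀ + dist x x' + C₀ :=
              add_le_add (add_le_add (by rw [dist_comm]; exact h1) le_rfl) h2
          _ = dist x x' + 2 * C₀ := by ring
      have hlowfg : dist x x' ≤ dist (f (g x)) (f (g x')) + 2 * C₀ := by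
        have h1 := hg x
        have h2 := hg x'
        calc dist x x' ≤ dist x (f (g x)) + dist (f (g x)) (f (g x')) + dist (f (g x')) x' :=
              dist_triangle4 _ _ _ _
          _ ≤ C₀ + dist (f (g x)) (f (g x')) + C₀ :=
              add_le_add (add_le_add h1 le_rfl) (by rw [dist_comm]; exact h2)
          _ = _ := by ring
      constructor
      · -- lower bound
        have h1 : (Glb (dist x x') : ℝ) ≤ wordDist S (g x) (g x') := by
          rw [wordDist_eq]
          have : dist x x' - 2 * C₀ ≤ rp (natWD S (g x) (g x')) := by
            have := (hfemb (g x) (g x')).2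
            rw [wordDist_eq] at this
            linarith
          exact_mod_cast hGlbmin _ _ this
        have h2 : rm (Glb (dist x x')) ≤ rm (wordDist S (g x) (g x')) :=
          hrmM (Set.mem_Ici.2 (Nat.cast_nonneg _)) (Set.mem_Ici.2 (wordDist_nonneg _ _ _)) h1
        have h3 : rm (wordDist S (g x) (g x')) ≤ dist (ψ γ x) (ψ γ x') := by
          have := (hfemb (γ * g x) (γ * g x')).1
          rwa [wordDist_mul_left] at this
        linarith
      · -- upper bound
        have h1 : dist (ψ γ x) (ψ γ x') ≤ rp (wordDist S (g x) (g x')) := by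
          have := (hfemb (γ * g x) (γ * g x')).2
          rwa [wordDist_mul_left] at this
        have h2 : wordDist S (g x) (g x') ≤ (F (dist x x' + 2 * C₀) : ℝ) := hdS _ _ _ hupfg
        have h3 : rp (wordDist S (g x) (g x')) ≤ rp (F (dist x x' + 2 * C₀)) :=
          hrpM (Set.mem_Ici.2 (wordDist_nonneg _ _ _)) (Set.mem_Ici.2 (Nat.cast_nonneg _)) h2
        linarith
    · -- proper
      intro R hR
      set T₁ : ℕ := F (R + C₀) with hT₁
      set T₂ : ℕ := F (R + 2 * C₀) with hT₂
      have hW₁ : {w : G | wordDist S 1 w ≤ (T₁ : ℝ)}.Finite := ball_finite hSfin hSsymm hSgen _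
      have hW₂ : {w : G | wordDist S 1 w ≤ (T₂ : ℝ)}.Finite := ball_finite hSfin hSsymm hSgen _
      have hP : ({w : G | wordDist S 1 w ≤ (T₁ : ℝ)} ×ˢ {w : G | wordDist S 1 w ≤ (T₂ : ℝ)}).Finite :=
        hW₁.prod hW₂
      refine ⟨hP.toFinset.card, fun x y => ?_⟩
      have hsub : {γ : G | ∃ z ∈ closedBall x R, ψ γ z ∈ closedBall y R} ⊆
          (fun p : G × G => g y * p.1⁻¹ * p.2 * (g x)⁻¹) ''
            ({w : G | wordDist S 1 w ≤ (T₁ : ℝ)} ×ˢ {w : G | wordDist S 1 w ≤ (T₂ : ℝ)}) := by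
        rintro γ ⟨z, hz, hψz⟩
        rw [mem_closedBall] at hz hψz
        refine ⟨((γ * g z)⁻¹ * g y, (g z)⁻¹ * g x), ⟨?_, ?_⟩, by group⟩
        · show wordDist S 1 ((γ * g z)⁻¹ * g y) ≤ (T₁ : ℝ)
          rw [wordDist_one]
          apply hdS
          calc dist (f (γ * g z)) (f (g y)) ≤ dist (f (γ * g z)) y + dist y (f (g y)) :=
                dist_triangle _ _ _
            _ ≤ R + C₀ := add_le_add hψz (hg y)
        · show wordDist S 1 ((g z)⁻¹ * g x) ≤ (T₂ : ℝ)
          rw [wordDist_one]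
          apply hdS
          calc dist (f (g z)) (f (g x)) ≤ dist (f (g z)) z + dist z x + dist x (f (g x)) :=
                dist_triangle4 _ _ _ _
            _ ≤ C₀ + R + C₀ :=
                add_le_add (add_le_add (by rw [dist_comm]; exact hg z) hz) (hg x)
            _ = R + 2 * C₀ := by ring
      calc {γ : G | ∃ z ∈ closedBall x R, ψ γ z ∈ closedBall y R}.encard
          ≤ _ := Set.encard_mono hsub
        _ ≤ ({w : G | wordDist S 1 w ≤ (T₁ : ℝ)} ×ˢ {w : G | wordDist S 1 w ≤ (T₂ : ℝ)}).encard :=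
            Set.encard_image_le _ _
        _ = hP.toFinset.card := by rw [Set.Finite.encard_eq_coe_toFinset_card]
    · -- cobounded
      refine ⟨f 1, C₀ + 1, by linarith, fun y => ⟨g y * (g (f 1))⁻¹, ?_⟩⟩
      have : ψ (g y * (g (f 1))⁻¹) (f 1) = f (g y) := by
        show f (g y * (g (f 1))⁻¹ * g (f 1)) = f (g y)
        congr 1
        group
      rw [this, dist_comm]
      exact lt_of_le_of_lt (hg y) (by linarith)


/-- Generalized Švarc–Milnor with converse: a coarsely connected metric space `X`
admits a proper cobounded coarse near-action by a finitely generated group `G`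
if and only if `X` is coarsely equivalent to `G` with its word metric. -/
theorem stmt12 {G X : Type*} [Group G] [MetricSpace X]
    (hX : IsCoarselyConnected X)
    (S : Set G) (hSfin : S.Finite) (hSsymm : ∀ s ∈ S, s⁻¹ ∈ S)
    (hSgen : Subgroup.closure S = ⊤) :
    (∃ (rm rp : ℝ → ℝ) (C : ℝ) (ψ : G → X → X),
        IsCoarseNearAction rm rp C ψ ∧ IsProperNearAction ψ ∧
          IsCoboundedNearAction ψ) ↔
      ∃ f : G → X, IsCoarseEquivPair (wordDist S) dist f := by
  exact ⟨fun h => dir_mp S hSfin hSsymm hSgen h, fun h => dir_mpr S hSfin hSsymm hSgen h⟩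
end

section
/- Let (X,d) be a proper metric space (all closed metric balls are compact) which is cocompact (there exist x₀ ∈ X and R > 0 such that for every y ∈ X there is a surjective self-isometry φ of X with d(φ(x₀), y) ≤ R) and contractible. Then X is uniformly contractible: for each R > 0 there exists S > R such that for every x ∈ X the inclusion of the open ball B(x,R) into the open ball B(x,S) is null-homotopic (homotopic, as a map B(x,R) → B(x,S), to a constant map). -/
open Metric Filter unitInterval

/-- `X` is cocompact: some orbit of the isometry group is `R`-dense. -/
def IsCocompactSpace (X : Type*) [MetricSpace X] : Prop :=
  ∃ (x₀ : X) (R : ℝ), 0 < R ∧ ∀ y : X, ∃ φ : X → X,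
    Isometry φ ∧ Function.Surjective φ ∧ dist (φ x₀) y ≤ R

/-- The inclusion of a smaller open ball into a larger one, as a continuous map. -/
noncomputable def ballInclusion {X : Type*} [MetricSpace X] (x : X) {R S : ℝ}
    (h : R ≤ S) : C(Metric.ball x R, Metric.ball x S) :=
  ⟨fun p => ⟨p.1, Metric.ball_subset_ball h p.2⟩,
    Continuous.subtype_mk continuous_subtype_val _⟩

/-- A proper, cocompact, contractible metric space is uniformly contractible. -/
theorem stmt15 {X : Type*} [MetricSpace X] [ProperSpace X]
    (hcc : IsCocompactSpace X) (hcontr : ContractibleSpace X) :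
    ∀ R : ℝ, 0 < R → ∃ S : ℝ, ∃ hRS : R < S, ∀ x : X,
      ∃ c : Metric.ball x S,
        (ballInclusion x hRS.le).Homotopic (ContinuousMap.const _ c) := by
  obtain ⟨x₀, R₀, hR₀, horb⟩ := hcc
  obtain ⟨y₀, hy₀⟩ := (contractible_iff_id_nullhomotopic X).mp hcontr
  obtain ⟨H⟩ := hy₀
  intro R hR
  -- the compact set traced out by the contraction of the closed ball of radius R + R₀
  set K : Set X := (fun p : I × X => H p) '' (Set.univ ×ˢ Metric.closedBall x₀ (R + R₀)) with hK
  have hKc : IsCompact K := by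
    apply IsCompact.image
    · exact (isCompact_univ.prod (isCompact_closedBall x₀ (R + R₀)))
    · exact H.continuous
  obtain ⟨S₀', hS₀'⟩ := hKc.isBounded.subset_closedBall x₀
  set S₀ : ℝ := max S₀' (R + R₀) + 1 with hS₀def
  have hS₀gt : R + R₀ < S₀ := lt_of_le_of_lt (le_max_right _ _) (lt_add_one _)
  have hKsub : K ⊆ Metric.ball x₀ S₀ := by
    intro q hq
    rw [Metric.mem_ball]
    have := Metric.mem_closedBall.mp (hS₀' hq)
    have := le_max_left S₀' (R + R₀)
    simp only [hS₀def]
    linarith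
  refine ⟨S₀ + R₀, by linarith, fun x => ?_⟩
  obtain ⟨φ, hiso, hsurj, hd⟩ := horb x
  -- upgrade φ to an isometry equivalence
  let e : X ≃ᵢ X := ⟨Equiv.ofBijective φ ⟨hiso.injective, hsurj⟩, hiso⟩
  have he : ∀ z, e z = φ z := fun z => rfl
  have hde : dist (e x₀) x ≤ R₀ := hd
  -- key membership fact
  have key : ∀ (t : I) (p : X), p ∈ Metric.ball x R →
      e (H (t, e.symm p)) ∈ Metric.ball x (S₀ + R₀) := by
    intro t p hp
    have hp' : e.symm p ∈ Metric.closedBall x₀ (R + R₀) := by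
      rw [Metric.mem_closedBall]
      have h2 := e.isometry.dist_eq (e.symm p) x₀
      rw [e.apply_symm_apply] at h2
      rw [← h2]
      have := Metric.mem_ball.mp hp
      linarith [dist_triangle p x (e x₀), dist_comm (e x₀) x ▸ hde]
    have hq : H (t, e.symm p) ∈ K := ⟨(t, e.symm p), ⟨Set.mem_univ _, hp'⟩, rfl⟩
    have hq' : H (t, e.symm p) ∈ Metric.ball x₀ S₀ := hKsub hq
    rw [Metric.mem_ball] at hq' ⊢
    have h3 : dist (e (H (t, e.symm p))) (e x₀) = dist (H (t, e.symm p)) x₀ :=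
      e.isometry.dist_eq _ _
    have := dist_triangle (e (H (t, e.symm p))) (e x₀) x
    linarith
  have hxball : x ∈ Metric.ball x R := Metric.mem_ball_self hR
  -- the constant point
  have hc : e y₀ ∈ Metric.ball x (S₀ + R₀) := by
    have := key 1 x hxball
    rwa [H.apply_one, ContinuousMap.const_apply] at this
  refine ⟨⟨e y₀, hc⟩, ⟨?_⟩⟩
  refine ⟨⟨fun q => ⟨e (H (q.1, e.symm q.2.1)), key q.1 q.2.1 q.2.2⟩, ?_⟩, ?_, ?_⟩
  · apply Continuous.subtype_mk
    exact e.continuous.comp (H.continuous.comp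
      (continuous_fst.prodMk (e.symm.continuous.comp
        (continuous_subtype_val.comp continuous_snd))))
  · intro p
    apply Subtype.ext
    simp only [ballInclusion, ContinuousMap.coe_mk]
    rw [H.apply_zero, ContinuousMap.id_apply, e.apply_symm_apply]
  · intro p
    apply Subtype.ext
    simp only [ContinuousMap.coe_mk]
    rw [H.apply_one, ContinuousMap.const_apply]
    rfl
end

section
/- Let (X,d) be a proper, cocompact metric space. Then X admits a sequence 𝒰₀, 𝒰₁, 𝒰₂, … of open covers such that: each 𝒰ᵢ has finite order (there is kᵢ ∈ ℕ such that no point of X lies in more than kᵢ members of 𝒰ᵢ); each 𝒰ᵢ is uniformly bounded (the diameters of its members have a finite upper bound mesh(𝒰ᵢ)); 𝒰_{i+1} refines 𝒰ᵢ (every member of 𝒰_{i+1} is contained in some member of 𝒰ᵢ); and mesh(𝒰ᵢ) → 0 as i → ∞. In particular X has finite macroscopic dimension, i.e. admits a uniformly bounded open cover of finite order. -/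
open Metric Filter

/-- Maximal `r`-separated sets exist and are `r`-dense. -/
lemma exists_net {X : Type*} [MetricSpace X] {r : ℝ} (hr : 0 < r) :
    ∃ S : Set X, S.Pairwise (fun a b => r ≤ dist a b) ∧ ∀ x : X, ∃ s ∈ S, dist x s < r := by
  have hz : ∀ c ⊆ {S : Set X | S.Pairwise (fun a b => r ≤ dist a b)},
      IsChain (· ⊆ ·) c → ∃ ub ∈ {S : Set X | S.Pairwise (fun a b => r ≤ dist a b)},
        ∀ s ∈ c, s ⊆ ub := by
    intro c hc hchain
    refine ⟨⋃₀ c, fun a ha b hb hab => ?_, fun s hs => Set.subset_sUnion_of_mem hs⟩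
    obtain ⟨s, hs, has⟩ := ha
    obtain ⟨t, ht, hbt⟩ := hb
    rcases hchain.total hs ht with h | h
    · exact hc ht (h has) hbt hab
    · exact hc hs has (h hbt) hab
  obtain ⟨S, hS⟩ := zorn_subset {S : Set X | S.Pairwise (fun a b => r ≤ dist a b)} hz
  refine ⟨S, hS.prop, fun x => ?_⟩
  by_contra h
  push_neg at h
  have hxS : x ∈ S := by
    have hP : insert x S ∈ {S : Set X | S.Pairwise (fun a b => r ≤ dist a b)} := by
      haveI : Std.Symm (fun a b : X => r ≤ dist a b) := ⟨fun a b hab => by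
        rwa [dist_comm]⟩
      rw [Set.mem_setOf_eq, Set.pairwise_insert_of_symm]
      exact ⟨hS.prop, fun b hb _ => h b hb⟩
    have heq : S = insert x S := hS.eq_of_subset hP (Set.subset_insert x S)
    rw [heq]; exact Set.mem_insert x S
  exact absurd (h x hxS) (by simp [hr])

/-- Uniform bound on the size of `ε`-separated subsets of balls of radius `r`. -/
lemma sep_bound {X : Type*} [MetricSpace X] [ProperSpace X]
    (hcc : IsCocompactSpace X) {r ε : ℝ} (hε : 0 < ε) :
    ∃ k : ℕ, ∀ (x : X) (S : Set X), S ⊆ closedBall x r →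
      S.Pairwise (fun a b => ε ≤ dist a b) → S.encard ≤ (k : ℕ∞) := by
  classical
  obtain ⟨x₀, R, hR, hφ⟩ := hcc
  have hK : IsCompact (closedBall x₀ (R + r)) := isCompact_closedBall x₀ (R + r)
  obtain ⟨T, hTsub, hTfin, hTcov⟩ := hK.elim_finite_subcover_image
    (b := closedBall x₀ (R + r)) (c := fun y => ball y (ε / 2)) (fun y _ => isOpen_ball)
    (fun y hy => Set.mem_biUnion hy (mem_ball_self (by linarith)))
  refine ⟨hTfin.toFinset.card, fun x S hSsub hSsep => ?_⟩
  obtain ⟨φ, hiso, hsurj, hdist⟩ := hφ x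
  -- inverse of φ
  have hinj := hiso.injective
  set e := Equiv.ofBijective φ ⟨hinj, hsurj⟩ with he
  have hψ : ∀ a : X, φ (e.symm a) = a := fun a => e.apply_symm_apply a
  have hmap : Set.MapsTo (fun s => e.symm s) S (closedBall x₀ (R + r)) := by
    intro s hs
    have h1 : dist (e.symm s) x₀ = dist s (φ x₀) := by
      rw [← hiso.dist_eq (e.symm s) x₀, hψ]
    have h2 : dist s (φ x₀) ≤ dist s x + dist x (φ x₀) := dist_triangle _ _ _
    have h3 : dist s x ≤ r := hSsub hs
    simp only [mem_closedBall]
    rw [h1]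
    rw [dist_comm x (φ x₀)] at h2
    linarith
  -- map each s to an element of T whose ball contains e.symm s
  have hch : ∀ s ∈ S, ∃ t ∈ hTfin.toFinset, e.symm s ∈ ball t (ε / 2) := by
    intro s hs
    have := hTcov (hmap hs)
    simp only [Set.mem_iUnion] at this
    obtain ⟨t, ht, hmem⟩ := this
    exact ⟨t, hTfin.mem_toFinset.mpr ht, hmem⟩
  choose f hf1 hf2 using hch
  have hSle : S.encard ≤ (↑hTfin.toFinset : Set X).encard := by
    refine Set.encard_le_encard_of_injOn (f := fun s => if h : s ∈ S then f s h else x₀)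
      (fun s hs => by simp only [hs, dif_pos]; exact hf1 s hs) ?_
    intro a ha b hb hab
    simp only [ha, hb, dif_pos] at hab
    by_contra hne
    have h1 := hf2 a ha
    have h2 := hf2 b hb
    rw [hab] at h1
    have hd : dist (e.symm a) (e.symm b) < ε := by
      calc dist (e.symm a) (e.symm b) ≤ dist (e.symm a) (f b hb) + dist (f b hb) (e.symm b) :=
            dist_triangle _ _ _
        _ < ε / 2 + ε / 2 := by
            rw [dist_comm (e.symm a) (f b hb)]
            exact add_lt_add (mem_ball'.mp h1) (mem_ball'.mp h2)
        _ = ε := by ring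
    have : dist a b < ε := by
      have hde := hiso.dist_eq (e.symm a) (e.symm b)
      rw [hψ, hψ] at hde
      rw [hde]; exact hd
    exact absurd (hSsep ha hb hne) (not_le.mpr this)
  rwa [Set.encard_coe_eq_coe_finsetCard] at hSle

/-- A proper cocompact metric space admits a sequence of uniformly bounded, finite
order open covers, each refining the previous, with mesh tending to `0`; in
particular it has finite macroscopic dimension. -/
theorem stmt16 {X : Type*} [MetricSpace X] [ProperSpace X]
    (hcc : IsCocompactSpace X) :
    (∃ U : ℕ → Set (Set X),
      (∀ i, ∀ V ∈ U i, IsOpen V) ∧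
      (∀ i, ⋃₀ U i = Set.univ) ∧
      (∀ i, ∃ k : ℕ, ∀ x : X, {V | V ∈ U i ∧ x ∈ V}.encard ≤ (k : ℕ∞)) ∧
      (∃ m : ℕ → ℝ, Tendsto m atTop (nhds 0) ∧
        ∀ i, ∀ V ∈ U i, EMetric.diam V ≤ ENNReal.ofReal (m i)) ∧
      (∀ i, ∀ V ∈ U (i + 1), ∃ W ∈ U i, V ⊆ W)) ∧
    ∃ V : Set (Set X), (∀ W ∈ V, IsOpen W) ∧ ⋃₀ V = Set.univ ∧
      (∃ B : ℝ, ∀ W ∈ V, EMetric.diam W ≤ ENNReal.ofReal B) ∧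
      ∃ k : ℕ, ∀ x : X, {W | W ∈ V ∧ x ∈ W}.encard ≤ (k : ℕ∞) := by
  set ε : ℕ → ℝ := fun i => (1 / 2 : ℝ) ^ i with hε
  have hεpos : ∀ i, 0 < ε i := fun i => pow_pos (by norm_num) i
  have hεhalf : ∀ i, 2 * ε (i + 1) = ε i := by
    intro i
    simp only [hε, pow_succ]
    ring
  choose S hSsep hSdense using fun i => exists_net (X := X) (hεpos i)
  set U : ℕ → Set (Set X) := fun i => (fun s => ball s (2 * ε i)) '' S i with hU
  have hopen : ∀ i, ∀ V ∈ U i, IsOpen V := by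
    rintro i V ⟨s, _, rfl⟩
    exact isOpen_ball
  have hcov : ∀ i, ⋃₀ U i = Set.univ := by
    intro i
    ext x
    simp only [Set.mem_sUnion, Set.mem_univ, iff_true]
    obtain ⟨s, hs, hd⟩ := hSdense i x
    exact ⟨ball s (2 * ε i), ⟨s, hs, rfl⟩, by
      exact mem_ball.mpr (by nlinarith [hεpos i])⟩
  have horder : ∀ i, ∃ k : ℕ, ∀ x : X, {V | V ∈ U i ∧ x ∈ V}.encard ≤ (k : ℕ∞) := by
    intro i
    obtain ⟨k, hk⟩ := sep_bound hcc (r := 2 * ε i) (ε := ε i) (hεpos i)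
    refine ⟨k, fun x => ?_⟩
    have hsub : {V | V ∈ U i ∧ x ∈ V} ⊆
        (fun s => ball s (2 * ε i)) '' {s | s ∈ S i ∧ x ∈ ball s (2 * ε i)} := by
      rintro V ⟨⟨s, hs, rfl⟩, hx⟩
      exact ⟨s, ⟨hs, hx⟩, rfl⟩
    calc {V | V ∈ U i ∧ x ∈ V}.encard
        ≤ ((fun s => ball s (2 * ε i)) '' {s | s ∈ S i ∧ x ∈ ball s (2 * ε i)}).encard :=
          Set.encard_le_encard hsub
      _ ≤ {s | s ∈ S i ∧ x ∈ ball s (2 * ε i)}.encard := Set.encard_image_le _ _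
      _ ≤ (k : ℕ∞) := by
          refine hk x _ (fun s hs => ?_) ((hSsep i).mono (fun s hs => hs.1))
          have : dist x s < 2 * ε i := mem_ball.mp hs.2
          rw [mem_closedBall, dist_comm]
          linarith
  have hmesh : ∀ i, ∀ V ∈ U i, EMetric.diam V ≤ ENNReal.ofReal (4 * ε i) := by
    rintro i V ⟨s, _, rfl⟩
    refine EMetric.diam_le (fun a ha b hb => ?_)
    rw [edist_dist]
    refine ENNReal.ofReal_le_ofReal ?_
    have h1 : dist a s < 2 * ε i := mem_ball.mp ha
    have h2 : dist b s < 2 * ε i := mem_ball.mp hb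
    have := dist_triangle a s b
    rw [dist_comm b s] at h2
    linarith
  have href : ∀ i, ∀ V ∈ U (i + 1), ∃ W ∈ U i, V ⊆ W := by
    rintro i V ⟨s, hs, rfl⟩
    obtain ⟨t, ht, hst⟩ := hSdense i s
    refine ⟨ball t (2 * ε i), ⟨t, ht, rfl⟩, fun y hy => ?_⟩
    have h1 : dist y s < 2 * ε (i + 1) := mem_ball.mp hy
    have h2 : 2 * ε (i + 1) = ε i := hεhalf i
    have := dist_triangle y s t
    exact mem_ball.mpr (by linarith)
  refine ⟨⟨U, hopen, hcov, horder, ⟨fun i => 4 * ε i, ?_, hmesh⟩, href⟩,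
    U 0, hopen 0, hcov 0, ⟨4 * ε 0, hmesh 0⟩, horder 0⟩
  have := (tendsto_pow_atTop_nhds_zero_of_lt_one (r := (1/2 : ℝ))
    (by norm_num) (by norm_num)).const_mul (4 : ℝ)
  simpa [hε, mul_zero] using this
end

section
/- Let X̄ be a compact metrizable space with a compatible metric d̄, let Z ⊆ X̄ be a closed subset, let X = X̄ ∖ Z, and let d be a metric on X inducing the subspace topology on X and such that (X,d) is proper (all closed d-balls are compact). Assume Z is a Z-set in X̄ (there is a homotopy H : X̄ × [0,1] → X̄ with H₀ = id and H_t(X̄) ⊆ X for all t > 0) and that the compactification is controlled: for every R > 0 and ε > 0 there is a compact set C ⊆ X such that every set A ⊆ X ∖ C with diam_d(A) < R satisfies diam_{d̄}(A) < ε. Then for each z ∈ Z, each neighborhood Ū of z in X̄, and each r > 0, there is a neighborhood V̄ of z in X̄ such that d(V, X ∖ U) ≥ r, where V = V̄ ∖ Z, U = Ū ∖ Z, and d(V, X ∖ U) denotes the infimum of d(v,x) over v ∈ V and x ∈ X ∖ U. -/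
open Metric Filter

/-- In a controlled `Z`-compactification, points of the boundary have neighborhoods
whose interior parts are arbitrarily `d`-far from the complement of a given
neighborhood. -/
theorem stmt17 {Xbar : Type*} [MetricSpace Xbar] [CompactSpace Xbar]
    (Z : Set Xbar) (hZclosed : IsClosed Z)
    (d : ↥Zᶜ → ↥Zᶜ → ℝ)
    (hd_self : ∀ a, d a a = 0)
    (hd_eq : ∀ a b, d a b = 0 → a = b)
    (hd_symm : ∀ a b, d a b = d b a)
    (hd_tri : ∀ a b c, d a c ≤ d a b + d b c)
    (hd_top : ∀ s : Set ↥Zᶜ,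
      IsOpen s ↔ ∀ a ∈ s, ∃ ε : ℝ, 0 < ε ∧ ∀ b : ↥Zᶜ, d a b < ε → b ∈ s)
    (hd_proper : ∀ (a : ↥Zᶜ) (r : ℝ), IsCompact {b : ↥Zᶜ | d a b ≤ r})
    (H : ℝ → Xbar → Xbar) (hH_cont : Continuous fun p : ℝ × Xbar => H p.1 p.2)
    (hH_zero : ∀ x, H 0 x = x)
    (hH_off : ∀ t : ℝ, 0 < t → t ≤ 1 → ∀ x, H t x ∉ Z)
    (hcontrolled : ∀ R ε : ℝ, 0 < R → 0 < ε → ∃ K : Set ↥Zᶜ, IsCompact K ∧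
      ∀ A : Set ↥Zᶜ, A ∩ K = ∅ → (∀ a ∈ A, ∀ b ∈ A, d a b < R) →
        ∀ a ∈ A, ∀ b ∈ A, dist (a : Xbar) (b : Xbar) < ε) :
    ∀ z ∈ Z, ∀ U ∈ nhds z, ∀ r : ℝ, 0 < r → ∃ V ∈ nhds z,
      ∀ v : ↥Zᶜ, (v : Xbar) ∈ V → ∀ x : ↥Zᶜ, (x : Xbar) ∉ U → r ≤ d v x := by

  intro z hz U hU r hr
  by_cases hne : Nonempty ↥Zᶜ
  · obtain ⟨a₀⟩ := hne
    obtain ⟨ε₀, hε₀, hball⟩ := Metric.mem_nhds_iff.1 hU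
    set ε := ε₀ / 2 with hεdef
    have hε : 0 < ε := by positivity
    obtain ⟨K, hKcpt, hKprop⟩ := hcontrolled r ε hr hε
    have hballs_open : ∀ (a : ↥Zᶜ) (ρ : ℝ), IsOpen {b | d a b < ρ} := by
      intro a ρ
      rw [hd_top]
      intro b hb
      refine ⟨ρ - d a b, by simpa using hb, fun c hc => ?_⟩
      have := hd_tri a b c
      simp only [Set.mem_setOf_eq] at hb ⊢
      linarith
    have hbdd : ∃ s : ℝ, ∀ a ∈ K, d a₀ a ≤ s := by
      have hcov : K ⊆ ⋃ a : ↥Zᶜ, {b | d a b < 1} := fun a _ =>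
        Set.mem_iUnion.2 ⟨a, by simp [hd_self]⟩
      obtain ⟨t, ht⟩ := hKcpt.elim_finite_subcover _ (fun a => hballs_open a 1) hcov
      obtain ⟨s, hs⟩ := ((t.finite_toSet.image (d a₀)).bddAbove)
      refine ⟨s + 1, fun a ha => ?_⟩
      obtain ⟨c, hct, hca⟩ := Set.mem_iUnion₂.1 (ht ha)
      have h1 : d a₀ c ≤ s := hs ⟨c, hct, rfl⟩
      have h2 := hd_tri a₀ c a
      simp only [Set.mem_setOf_eq] at hca
      linarith
    obtain ⟨s, hs⟩ := hbdd
    set K2 : Set ↥Zᶜ := {b | d a₀ b ≤ s + r} with hK2def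
    have hK2cpt : IsCompact K2 := hd_proper a₀ (s + r)
    have himg : IsCompact (Subtype.val '' K2) := hK2cpt.image continuous_subtype_val
    have hzimg : z ∉ Subtype.val '' K2 := by
      rintro ⟨b, -, rfl⟩
      exact b.2 hz
    refine ⟨Metric.ball z ε ∩ (Subtype.val '' K2)ᶜ, ?_, ?_⟩
    · exact Filter.inter_mem (Metric.ball_mem_nhds z hε)
        (himg.isClosed.isOpen_compl.mem_nhds hzimg)
    · rintro v ⟨hvball, hvK2i⟩ x hx
      by_contra hlt
      push_neg at hlt
      have hvK2 : v ∉ K2 := fun h => hvK2i ⟨v, h, rfl⟩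
      have hxK : x ∉ K := by
        intro hxK
        apply hvK2
        have h1 : d a₀ x ≤ s := hs x hxK
        have h2 := hd_tri a₀ x v
        have h3 : d x v < r := by rw [hd_symm]; exact hlt
        simp only [hK2def, Set.mem_setOf_eq]
        linarith
      have hvK : v ∉ K := by
        intro hvK
        exact hvK2 (by simp only [hK2def, Set.mem_setOf_eq]; linarith [hs v hvK])
      have hA : ({v, x} : Set ↥Zᶜ) ∩ K = ∅ := by
        apply Set.eq_empty_iff_forall_notMem.2
        rintro y ⟨hy1, hy2⟩
        rcases hy1 with rfl | rfl
        · exact hvK hy2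
        · exact hxK hy2
      have hpair : ∀ a ∈ ({v, x} : Set ↥Zᶜ), ∀ b ∈ ({v, x} : Set ↥Zᶜ), d a b < r := by
        rintro a (rfl | rfl) b (rfl | rfl)
        · rw [hd_self]; exact hr
        · exact hlt
        · rw [hd_symm]; exact hlt
        · rw [hd_self]; exact hr
      have hdist : dist (v : Xbar) (x : Xbar) < ε :=
        hKprop _ hA hpair v (Set.mem_insert _ _) x (Set.mem_insert_of_mem _ rfl)
      apply hx
      apply hball
      have hvz : dist (v : Xbar) z < ε := Metric.mem_ball.1 hvball
      have htr : dist (x : Xbar) z ≤ dist (x : Xbar) (v : Xbar) + dist (v : Xbar) z :=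
        dist_triangle _ _ _
      rw [dist_comm (x : Xbar) (v : Xbar)] at htr
      have hfin : dist (x : Xbar) z < ε₀ := by
        rw [hεdef] at hdist hvz
        linarith
      exact Metric.mem_ball.2 hfin
  · exact ⟨Set.univ, Filter.univ_mem, fun v _ => absurd ⟨v⟩ hne⟩
end
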